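/- arXiv:1803.03685 — 11 statements merged into one kernel-verified Lean document; each statement's English description precedes it below -/
import Mathlib

section
/- Let X ⊆ ℤ × ℤ be a finite set of crossings with type map t : ℤ × ℤ → Bool. There exists a height assignment h such that every crossing v ∈ X is resolved with respect to h if and only if (X, t) has no Celtic configuration. (This is the combinatorial core of the paper's main theorem: a lattice diagram of a knot or link is the projection of a proper lattice stick knot or link if and only if it does not contain a Celtic configuration, where a height assignment encodes the heights of the horizontal edges of a lattice stick link in the ℤ³ lattice projecting onto the diagram.) -/
/-- Two points of the ℤ² lattice are adjacent if they differ by a unit vector. -/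
def Adjacent (p q : ℤ × ℤ) : Prop :=
  p - q = (1, 0) ∨ p - q = (-1, 0) ∨ p - q = (0, 1) ∨ p - q = (0, -1)

/-- Two vectors in ℤ × ℤ are perpendicular if their dot product vanishes. -/
def Perp (a b : ℤ × ℤ) : Prop := a.1 * b.1 + a.2 * b.2 = 0

lemma adjacent_symm {p q : ℤ × ℤ} (h : Adjacent p q) : Adjacent q p := by
  simp only [Adjacent, Prod.ext_iff, Prod.fst_sub, Prod.snd_sub] at h ⊢
  omega

/-- A Celtic configuration in `(X, t)` based at `p`. -/
def IsCeltic (X : Set (ℤ × ℤ)) (t : ℤ × ℤ → Bool) (p : ℤ × ℤ) : Prop :=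
  p ∈ X ∧ p + (1, 0) ∈ X ∧ p + (0, 1) ∈ X ∧ p + (1, 1) ∈ X ∧
    t p = t (p + (1, 1)) ∧ t (p + (1, 0)) = t (p + (0, 1)) ∧ t p ≠ t (p + (1, 0))

/-- A crossing `v` is resolved with respect to the height assignment `h`. -/
def Resolved (t : ℤ × ℤ → Bool) (h : ℤ × ℤ → ℤ × ℤ → ℤ) (v : ℤ × ℤ) : Prop :=
  if t v then
    (h v (v + (0, 1)) < h v (v + (1, 0)) ∧ h v (v + (0, 1)) < h v (v - (1, 0)) ∧
     h v (v - (0, 1)) < h v (v + (1, 0)) ∧ h v (v - (0, 1)) < h v (v - (1, 0)))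
  else
    (h v (v + (1, 0)) < h v (v + (0, 1)) ∧ h v (v + (1, 0)) < h v (v - (0, 1)) ∧
     h v (v - (1, 0)) < h v (v + (0, 1)) ∧ h v (v - (1, 0)) < h v (v - (0, 1)))

/-- `v ∈ X` is a problem crossing: it has a pair of nearby neighbors in `X`,
both of the opposite crossing type. -/
def ProblemCrossing (X : Set (ℤ × ℤ)) (t : ℤ × ℤ → Bool) (v : ℤ × ℤ) : Prop :=
  v ∈ X ∧ ∃ a b : ℤ × ℤ, a ∈ X ∧ b ∈ X ∧ a ≠ b ∧ Adjacent a v ∧ Adjacent b v ∧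
    Perp (a - v) (b - v) ∧ t a ≠ t v ∧ t b ≠ t v

/-- `w` is a bad neighbor of `v`. -/
def BadNeighbor (X : Set (ℤ × ℤ)) (t : ℤ × ℤ → Bool) (v w : ℤ × ℤ) : Prop :=
  v ∈ X ∧ w ∈ X ∧ Adjacent w v ∧ t w ≠ t v ∧
    ∃ u : ℤ × ℤ, u ∈ X ∧ Adjacent u v ∧ Perp (u - v) (w - v) ∧ t u ≠ t v

/-- The problem crossing graph of `(X, t)`. -/
def ProblemGraph (X : Set (ℤ × ℤ)) (t : ℤ × ℤ → Bool) : SimpleGraph (ℤ × ℤ) where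
  Adj v w := v ≠ w ∧ ProblemCrossing X t v ∧ ProblemCrossing X t w ∧ Adjacent v w ∧
    BadNeighbor X t v w ∧ BadNeighbor X t w v
  symm := ⟨fun v w ⟨h1, h2, h3, h4, h5, h6⟩ => ⟨h1.symm, h3, h2, adjacent_symm h4, h6, h5⟩⟩
  loopless := ⟨fun v h => h.1 rfl⟩

namespace CelticAux


lemma key (X : Set (ℤ × ℤ)) (t : ℤ × ℤ → Bool) (W : Set (ℤ × ℤ)) (hWX : W ⊆ X)
    (hfin : W.Finite) (hne : W.Nonempty)
    (hV : ∀ w ∈ W, ∃ v ∈ W, (v = w + (0,1) ∨ v = w - (0,1)) ∧ t v ≠ t w)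
    (hH : ∀ w ∈ W, ∃ v ∈ W, (v = w + (1,0) ∨ v = w - (1,0)) ∧ t v ≠ t w) :
    ∃ p, IsCeltic X t p := by
  classical
  obtain ⟨m, hmF, hmmin⟩ := hfin.toFinset.exists_min_image (fun w => w.1 + w.2)
    (by simpa using hne)
  have hF'ne : (hfin.toFinset.filter (fun w => w.1 + w.2 = m.1 + m.2)).Nonempty :=
    ⟨m, by simp [hmF]⟩
  obtain ⟨w, hwF', hwmax⟩ := Finset.exists_max_image _ (fun w => w.1) hF'ne
  simp only [Finset.mem_filter, Set.Finite.mem_toFinset] at hwF'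
  obtain ⟨hwW, hwsum⟩ := hwF'
  have hmin : ∀ v ∈ W, m.1 + m.2 ≤ v.1 + v.2 := fun v hv =>
    hmmin v (hfin.mem_toFinset.mpr hv)
  have hmax : ∀ v ∈ W, v.1 + v.2 = m.1 + m.2 → v.1 ≤ w.1 := fun v hv hs =>
    hwmax v (Finset.mem_filter.mpr ⟨hfin.mem_toFinset.mpr hv, hs⟩)
  obtain ⟨a, haW, hadir, hat⟩ := hV w hwW
  have ha : a = w + (0,1) := by
    rcases hadir with h | h
    · exact h
    · exfalso; have h1 := hmin a haW; subst h
      simp only [Prod.fst_sub, Prod.snd_sub] at h1; omega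
  obtain ⟨b, hbW, hbdir, hbt⟩ := hH w hwW
  have hb : b = w + (1,0) := by
    rcases hbdir with h | h
    · exact h
    · exfalso; have h1 := hmin b hbW; subst h
      simp only [Prod.fst_sub, Prod.snd_sub] at h1; omega
  obtain ⟨c, hcW, hcdir, hct⟩ := hV b hbW
  have hc : c = w + (1,1) := by
    rcases hcdir with h | h
    · subst h; subst hb; ext <;> simp
    · exfalso
      subst h; subst hb
      have hsum : (w + (1,0) - (0,1)).1 + (w + (1,0) - (0,1)).2 = m.1 + m.2 := by
        simp only [Prod.fst_sub, Prod.snd_sub, Prod.fst_add, Prod.snd_add]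
        omega
      have h1 := hmax _ hcW hsum
      simp only [Prod.fst_sub, Prod.fst_add] at h1
      omega
  subst ha; subst hb; subst hc
  have b1 : ∀ x y z : Bool, y ≠ x → z ≠ y → z = x := by decide
  have b2 : ∀ x y z : Bool, y ≠ x → z ≠ x → y = z := by decide
  exact ⟨w, hWX hwW, hWX hbW, hWX haW, hWX hcW,
    (b1 (t w) (t (w + (1,0))) (t (w + (1,1))) hbt hct).symm,
    b2 (t w) (t (w + (1,0))) (t (w + (0,1))) hbt hat, (Ne.symm hbt)⟩

/-- helper: a vertical neighbour. -/
lemma vcases {u w : ℤ × ℤ} (h : Adjacent u w) (h1 : u.1 = w.1) :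
    u = w + (0,1) ∨ u = w - (0,1) := by
  simp only [Adjacent, Prod.ext_iff, Prod.fst_sub, Prod.snd_sub, Prod.fst_add,
    Prod.snd_add] at *
  omega

/-- helper: a horizontal neighbour. -/
lemma hcases {u w : ℤ × ℤ} (h : Adjacent u w) (h1 : u.1 ≠ w.1) :
    u = w + (1,0) ∨ u = w - (1,0) := by
  simp only [Adjacent, Prod.ext_iff, Prod.fst_sub, Prod.snd_sub, Prod.fst_add,
    Prod.snd_add] at *
  omega

/-- A mixed oriented edge `(p, q)`: both endpoints crossings of opposite types,
oriented so that the edge is *low* at `p` and *high* at `q`. -/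
def Mixed (X : Set (ℤ × ℤ)) (t : ℤ × ℤ → Bool) (e : (ℤ × ℤ) × (ℤ × ℤ)) : Prop :=
  e.1 ∈ X ∧ e.2 ∈ X ∧ Adjacent e.1 e.2 ∧ t e.1 ≠ t e.2 ∧ (t e.1 = true ↔ e.1.1 = e.2.1)

/-- The constraint relation between mixed edges: `e` must get a smaller height
than `e'` (they meet at the vertex `e.1 = e'.2`, where `e` is low and `e'` high). -/
def MRel (X : Set (ℤ × ℤ)) (t : ℤ × ℤ → Bool) (e e' : (ℤ × ℤ) × (ℤ × ℤ)) : Prop :=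
  Mixed X t e ∧ Mixed X t e' ∧ e.1 = e'.2

lemma no_cycle (X : Set (ℤ × ℤ)) (hX : X.Finite) (t : ℤ × ℤ → Bool)
    (hnc : ¬ ∃ p, IsCeltic X t p) (e₀ : (ℤ × ℤ) × (ℤ × ℤ)) :
    ¬ Relation.TransGen (MRel X t) e₀ e₀ := by
  intro he
  set r := MRel X t with hr
  set C : Set ((ℤ × ℤ) × (ℤ × ℤ)) :=
    {e | Relation.ReflTransGen r e₀ e ∧ Relation.TransGen r e e₀} with hC
  have hsucc : ∀ e ∈ C, ∃ b ∈ C, r e b := by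
    rintro e ⟨h1, h2⟩
    obtain ⟨b, hb, hb2⟩ := Relation.TransGen.head'_iff.mp h2
    refine ⟨b, ⟨h1.tail hb, ?_⟩, hb⟩
    rcases Relation.reflTransGen_iff_eq_or_transGen.mp hb2 with h | h
    · rw [← h]; exact he
    · exact h
  have hpred : ∀ e ∈ C, ∃ d ∈ C, r d e := by
    rintro e ⟨h1, h2⟩
    have hcyc : Relation.TransGen r e e := h2.trans_left h1
    obtain ⟨d, hd1, hd2⟩ := Relation.TransGen.tail'_iff.mp hcyc
    exact ⟨d, ⟨h1.trans hd1, Relation.TransGen.head hd2 h2⟩, hd2⟩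
  set W : Set (ℤ × ℤ) := {v | ∃ e ∈ C, e.1 = v} with hW
  have hfacts : ∀ w ∈ W, ∃ z u : ℤ × ℤ, z ∈ W ∧ u ∈ W ∧
      Mixed X t (w, z) ∧ Mixed X t (u, w) := by
    rintro w ⟨e, heC, rfl⟩
    obtain ⟨b, hbC, hrb⟩ := hsucc e heC
    obtain ⟨d, hdC, hrd⟩ := hpred e heC
    refine ⟨e.2, b.1, ⟨d, hdC, hrd.2.2⟩, ⟨b, hbC, rfl⟩, hrb.1, ?_⟩
    have h2 : e.1 = b.2 := hrb.2.2
    rw [h2]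
    exact hrb.2.1
  have hWX : W ⊆ X := fun w hw => by
    obtain ⟨z, u, _, _, hm, _⟩ := hfacts w hw
    exact hm.1
  apply hnc
  apply key X t W hWX (hX.subset hWX) ⟨e₀.1, e₀, ⟨Relation.ReflTransGen.refl, he⟩, rfl⟩
  · intro w hw
    obtain ⟨z, u, hzW, huW, hmz, hmu⟩ := hfacts w hw
    cases htw : t w with
    | true =>
      refine ⟨z, hzW, ?_, ?_⟩
      · exact vcases (adjacent_symm hmz.2.2.1) (hmz.2.2.2.2.mp htw).symm
      · intro h2; exact hmz.2.2.2.1 (htw.trans h2.symm)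
    | false =>
      refine ⟨u, huW, ?_, ?_⟩
      · have htu : t u = true := by
          have := hmu.2.2.2.1; simp only [htw] at this; simpa using this
        exact vcases hmu.2.2.1 (hmu.2.2.2.2.mp htu)
      · have := hmu.2.2.2.1; simp [htw] at this ⊢; simpa using this
  · intro w hw
    obtain ⟨z, u, hzW, huW, hmz, hmu⟩ := hfacts w hw
    cases htw : t w with
    | true =>
      refine ⟨u, huW, ?_, ?_⟩
      · have htu : t u = false := by
          have := hmu.2.2.2.1; simp only [htw] at this; simpa using this
        refine hcases hmu.2.2.1 ?_
        intro hx
        have := hmu.2.2.2.2.mpr hx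
        rw [htu] at this; exact Bool.false_ne_true this
      · have := hmu.2.2.2.1; simp [htw] at this ⊢; simpa using this
    | false =>
      refine ⟨z, hzW, ?_, ?_⟩
      · refine hcases (adjacent_symm hmz.2.2.1) ?_
        intro hx
        have := hmz.2.2.2.2.mpr hx.symm
        rw [htw] at this; exact Bool.false_ne_true this
      · intro h2; exact hmz.2.2.2.1 (htw.trans h2.symm)

variable (X : Set (ℤ × ℤ)) (t : ℤ × ℤ → Bool)

open Classical in
/-- coarse level of the edge `{p, q}` as seen from its endpoint `p`. -/
noncomputable def fE (p q : ℤ × ℤ) : ℤ :=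
  if p ∈ X ∧ Adjacent p q then (if t p = true ↔ p.1 = q.1 then -1 else 1) else 0

/-- rank of a mixed edge in the constraint relation. -/
noncomputable def rk (e : (ℤ × ℤ) × (ℤ × ℤ)) : ℕ :=
  {e' | Mixed X t e' ∧ Relation.TransGen (MRel X t) e' e}.ncard

noncomputable def NB : ℕ := {e | Mixed X t e}.ncard + 1

open Classical in
noncomputable def chiE (p q : ℤ × ℤ) : ℤ :=
  if Mixed X t (p, q) then rk X t (p, q) else if Mixed X t (q, p) then rk X t (q, p) else 0

/-- The height assignment. -/
noncomputable def HT (p q : ℤ × ℤ) : ℤ :=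
  (NB X t) * (fE X t p q + fE X t q p) + chiE X t p q

lemma fE_bounds (p q : ℤ × ℤ) : -1 ≤ fE X t p q ∧ fE X t p q ≤ 1 := by
  rw [fE]; split_ifs <;> omega

lemma mixed_antisymm {p q : ℤ × ℤ} (h : Mixed X t (p, q)) : ¬ Mixed X t (q, p) := by
  rintro ⟨_, _, _, hne, hiff⟩
  obtain ⟨_, _, _, hne', hiff'⟩ := h
  simp only at *
  by_cases hx : p.1 = q.1
  · exact hne' ((hiff'.mpr hx).trans (hiff.mpr hx.symm).symm)
  · have h1 : t p = false := by
      cases hp : t p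
      · rfl
      · exact absurd (hiff'.mp hp) hx
    have h2 : t q = false := by
      cases hq : t q
      · rfl
      · exact absurd (hiff.mp hq) (fun h => hx h.symm)
    exact hne' (h1.trans h2.symm)

lemma HT_symm (p q : ℤ × ℤ) : HT X t p q = HT X t q p := by
  classical
  have hchi : chiE X t p q = chiE X t q p := by
    rw [chiE, chiE]
    by_cases h1 : Mixed X t (p, q)
    · rw [if_pos h1, if_neg (mixed_antisymm X t h1), if_pos h1]
    · by_cases h2 : Mixed X t (q, p)
      · rw [if_neg h1, if_pos h2, if_pos h2]
      · rw [if_neg h1, if_neg h2, if_neg h2, if_neg h1]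
  rw [HT, HT, hchi, add_comm (fE X t p q)]

lemma mixed_finite (hX : X.Finite) : {e | Mixed X t e}.Finite :=
  (hX.prod hX).subset (fun e h => Set.mem_prod.mpr ⟨h.1, h.2.1⟩)

lemma chiE_bounds (hX : X.Finite) (p q : ℤ × ℤ) :
    0 ≤ chiE X t p q ∧ chiE X t p q < NB X t := by
  classical
  have hrk : ∀ e, (rk X t e : ℤ) < NB X t := by
    intro e
    have hle : rk X t e ≤ {e | Mixed X t e}.ncard :=
      Set.ncard_le_ncard (fun e' h => h.1) (mixed_finite X t hX)
    rw [NB]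
    push_cast
    omega
  constructor
  · rw [chiE]; split_ifs
    · exact Int.natCast_nonneg _
    · exact Int.natCast_nonneg _
    · exact le_refl 0
  · rw [chiE]; split_ifs
    · exact hrk _
    · exact hrk _
    · rw [NB]; push_cast; omega

lemma rk_lt (hX : X.Finite) (hacyc : ∀ e, ¬ Relation.TransGen (MRel X t) e e)
    {e e' : (ℤ × ℤ) × (ℤ × ℤ)} (h : MRel X t e e') : rk X t e < rk X t e' := by
  apply Set.ncard_lt_ncard
  · constructor
    · rintro x ⟨hm, htr⟩
      exact ⟨hm, htr.tail h⟩
    · intro hsub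
      exact hacyc e (hsub ⟨h.1, Relation.TransGen.single h⟩).2
  · exact (mixed_finite X t hX).subset (fun e' h => h.1)

lemma bool_ne {x y : Bool} {P Q : Prop} (hPQ : P ↔ Q) (h1 : x = true ↔ P)
    (h2 : ¬(y = true ↔ Q)) : x ≠ y := by
  by_cases hP : P
  · have hx : x = true := h1.mpr hP
    have hy : y ≠ true := fun hy => h2 (iff_of_true hy (hPQ.mp hP))
    simp [hx]; simpa using hy
  · have hx : x ≠ true := fun hx => hP (h1.mp hx)
    have hy : y = true := by
      by_contra hy
      exact h2 (iff_of_false hy (fun hQ => hP (hPQ.mpr hQ)))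
    simp [hy]; simpa using hx

lemma step (hX : X.Finite) (hacyc : ∀ e, ¬ Relation.TransGen (MRel X t) e e)
    (v a b : ℤ × ℤ) (hv : v ∈ X) (hva : Adjacent v a) (hvb : Adjacent v b)
    (hlow : t v = true ↔ v.1 = a.1) (hhigh : ¬(t v = true ↔ v.1 = b.1)) :
    HT X t v a < HT X t v b := by
  classical
  have hfa : fE X t v a = -1 := by rw [fE, if_pos ⟨hv, hva⟩, if_pos hlow]
  have hfb : fE X t v b = 1 := by rw [fE, if_pos ⟨hv, hvb⟩, if_neg hhigh]
  obtain ⟨hA1, hA2⟩ := fE_bounds X t a v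
  obtain ⟨hB1, hB2⟩ := fE_bounds X t b v
  obtain ⟨hca, _⟩ := chiE_bounds X t hX v a
  obtain ⟨hcb, hcb2⟩ := chiE_bounds X t hX v b
  obtain ⟨hca', hca2⟩ := chiE_bounds X t hX v a
  have hN : (1 : ℤ) ≤ NB X t := by rw [NB]; push_cast; omega
  rw [HT, HT, hfa, hfb]
  by_cases hc : fE X t a v - 1 < fE X t b v + 1
  · have h1 : fE X t a v - 1 + 1 ≤ fE X t b v + 1 := by omega
    have h2 : (NB X t : ℤ) * (fE X t a v - 1 + 1) ≤ NB X t * (fE X t b v + 1) :=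
      mul_le_mul_of_nonneg_left h1 (by omega)
    have h3 : (NB X t : ℤ) * (-1 + fE X t a v) + chiE X t v a <
        NB X t * (fE X t a v - 1 + 1) := by nlinarith
    calc (NB X t : ℤ) * (-1 + fE X t a v) + chiE X t v a
        < NB X t * (fE X t b v + 1) := lt_of_lt_of_le h3 h2
      _ ≤ NB X t * (1 + fE X t b v) + chiE X t v b := by rw [add_comm (fE X t b v)]; omega
  · -- tie case: fE a v = 1 and fE b v = -1
    have hA : fE X t a v = 1 := by omega
    have hB : fE X t b v = -1 := by omega
    rw [fE] at hA hB
    split_ifs at hA hB with h1 h2 h3 h4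
    -- surviving case: h1 : a ∈ X ∧ Adjacent a v, h2 : ¬(t a ↔ a.1 = v.1),
    --                 h3 : b ∈ X ∧ Adjacent b v, h4 : t b ↔ b.1 = v.1
    rotate_left
    all_goals try omega
    have hma : Mixed X t (v, a) :=
      ⟨hv, h1.1, hva, bool_ne (Iff.intro Eq.symm Eq.symm) hlow h2, hlow⟩
    have hmb : Mixed X t (b, v) :=
      ⟨h3.1, hv, h3.2, bool_ne (Iff.intro Eq.symm Eq.symm) h4 hhigh, h4⟩
    have hrel : MRel X t (v, a) (b, v) := ⟨hma, hmb, rfl⟩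
    have hchia : chiE X t v a = rk X t (v, a) := by rw [chiE, if_pos hma]
    have hchib : chiE X t v b = rk X t (b, v) := by
      have hnb : ¬ Mixed X t (v, b) := fun hm => hhigh hm.2.2.2.2
      rw [chiE, if_neg hnb, if_pos hmb]
    have := rk_lt X t hX hacyc hrel
    have hlt : (rk X t (v, a) : ℤ) < rk X t (b, v) := by exact_mod_cast this
    rw [hchia, hchib]
    have : (-1 : ℤ) + fE X t a v = 0 := by omega
    rw [this]
    have : (1 : ℤ) + fE X t b v = 0 := by omega
    rw [this]
    omega


end CelticAux

/-- **Main theorem (combinatorial core).** For a finite set of crossings `X` with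
type map `t`, there is a (symmetric) height assignment resolving every crossing
of `X` if and only if `(X, t)` has no Celtic configuration. -/
theorem exists_resolving_height_iff_no_celtic
    (X : Set (ℤ × ℤ)) (hX : X.Finite) (t : ℤ × ℤ → Bool) :
    (∃ h : ℤ × ℤ → ℤ × ℤ → ℤ, (∀ p q, h p q = h q p) ∧ ∀ v ∈ X, Resolved t h v) ↔
      ¬ ∃ p : ℤ × ℤ, IsCeltic X t p := by

  constructor
  · rintro ⟨h, hsymm, hres⟩ ⟨p, hpX, hbX, hcX, hdX, h11, h10, hne⟩
    have e1 : p + (1,0) + (0,1) = p + (1,1) := by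
      simp only [Prod.ext_iff, Prod.fst_add, Prod.snd_add]; omega
    have e2 : p + (1,0) - (1,0) = p := by
      simp only [Prod.ext_iff, Prod.fst_add, Prod.snd_add, Prod.fst_sub, Prod.snd_sub]; omega
    have e3 : p + (0,1) + (1,0) = p + (1,1) := by
      simp only [Prod.ext_iff, Prod.fst_add, Prod.snd_add]; omega
    have e4 : p + (0,1) - (0,1) = p := by
      simp only [Prod.ext_iff, Prod.fst_add, Prod.snd_add, Prod.fst_sub, Prod.snd_sub]; omega
    have e5 : p + (1,1) - (0,1) = p + (1,0) := by
      simp only [Prod.ext_iff, Prod.fst_add, Prod.snd_add, Prod.fst_sub, Prod.snd_sub]; omega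
    have e6 : p + (1,1) - (1,0) = p + (0,1) := by
      simp only [Prod.ext_iff, Prod.fst_add, Prod.snd_add, Prod.fst_sub, Prod.snd_sub]; omega
    have bfalse : ∀ x y : Bool, x = true → x ≠ y → y = false := by decide
    have btrue : ∀ x y : Bool, x = false → x ≠ y → y = true := by decide
    have Ra := hres p hpX
    have Rb := hres _ hbX
    have Rc := hres _ hcX
    have Rd := hres _ hdX
    rw [Resolved] at Ra Rb Rc Rd
    cases htp : t p with
    | true =>
      have htb : t (p + (1,0)) = false := bfalse _ _ htp hne
      have htc : t (p + (0,1)) = false := h10 ▸ htb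
      have htd : t (p + (1,1)) = true := by rw [← h11]; exact htp
      rw [if_pos htp] at Ra
      rw [if_pos htd] at Rd
      rw [if_neg (by rw [htb]; exact Bool.false_ne_true)] at Rb
      rw [if_neg (by rw [htc]; exact Bool.false_ne_true)] at Rc
      have i1 := Ra.1
      have i2 := Rb.2.2.1
      rw [e2, e1] at i2
      have i3 := Rd.2.2.2
      rw [e5, e6] at i3
      have i4 := Rc.2.1
      rw [e3, e4] at i4
      linarith [i1, i2, i3, i4, hsymm p (p+(1,0)), hsymm (p+(1,0)) (p+(1,1)),
        hsymm (p+(1,1)) (p+(0,1)), hsymm (p+(0,1)) p]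
    | false =>
      have htb : t (p + (1,0)) = true := btrue _ _ htp hne
      have htc : t (p + (0,1)) = true := h10 ▸ htb
      have htd : t (p + (1,1)) = false := by rw [← h11]; exact htp
      rw [if_neg (by rw [htp]; exact Bool.false_ne_true)] at Ra
      rw [if_neg (by rw [htd]; exact Bool.false_ne_true)] at Rd
      rw [if_pos htb] at Rb
      rw [if_pos htc] at Rc
      have i1 := Ra.1
      have i2 := Rc.2.2.1
      rw [e4, e3] at i2
      have i3 := Rd.2.2.2
      rw [e6, e5] at i3
      have i4 := Rb.2.1
      rw [e1, e2] at i4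
      linarith [i1, i2, i3, i4, hsymm p (p+(0,1)), hsymm (p+(0,1)) (p+(1,1)),
        hsymm (p+(1,1)) (p+(1,0)), hsymm (p+(1,0)) p]
  · intro hnc
    classical
    have hacyc := CelticAux.no_cycle X hX t hnc
    refine ⟨CelticAux.HT X t, CelticAux.HT_symm X t, ?_⟩
    intro v hv
    have a1 : Adjacent v (v + (0,1)) := by
      simp only [Adjacent, Prod.ext_iff, Prod.fst_sub, Prod.snd_sub, Prod.fst_add,
        Prod.snd_add]; omega
    have a2 : Adjacent v (v - (0,1)) := by
      simp only [Adjacent, Prod.ext_iff, Prod.fst_sub, Prod.snd_sub, Prod.fst_add,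
        Prod.snd_add]; omega
    have a3 : Adjacent v (v + (1,0)) := by
      simp only [Adjacent, Prod.ext_iff, Prod.fst_sub, Prod.snd_sub, Prod.fst_add,
        Prod.snd_add]; omega
    have a4 : Adjacent v (v - (1,0)) := by
      simp only [Adjacent, Prod.ext_iff, Prod.fst_sub, Prod.snd_sub, Prod.fst_add,
        Prod.snd_add]; omega
    rw [Resolved]
    cases htv : t v with
    | true =>
      rw [if_pos rfl]
      refine ⟨?_, ?_, ?_, ?_⟩
      · exact CelticAux.step X t hX hacyc v _ _ hv a1 a3 (by rw [htv]; simp; try omega)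
          (by rw [htv]; simp; try omega)
      · exact CelticAux.step X t hX hacyc v _ _ hv a1 a4 (by rw [htv]; simp; try omega)
          (by rw [htv]; simp; try omega)
      · exact CelticAux.step X t hX hacyc v _ _ hv a2 a3 (by rw [htv]; simp; try omega)
          (by rw [htv]; simp; try omega)
      · exact CelticAux.step X t hX hacyc v _ _ hv a2 a4 (by rw [htv]; simp; try omega)
          (by rw [htv]; simp; try omega)
    | false =>
      rw [if_neg (by exact Bool.false_ne_true)]
      refine ⟨?_, ?_, ?_, ?_⟩
      · exact CelticAux.step X t hX hacyc v _ _ hv a3 a1 (by rw [htv]; simp; try omega)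
          (by rw [htv]; simp; try omega)
      · exact CelticAux.step X t hX hacyc v _ _ hv a3 a2 (by rw [htv]; simp; try omega)
          (by rw [htv]; simp; try omega)
      · exact CelticAux.step X t hX hacyc v _ _ hv a4 a1 (by rw [htv]; simp; try omega)
          (by rw [htv]; simp; try omega)
      · exact CelticAux.step X t hX hacyc v _ _ hv a4 a2 (by rw [htv]; simp; try omega)
          (by rw [htv]; simp; try omega)
end

section
/- Let X ⊆ ℤ × ℤ be a set of crossings with type map t : ℤ × ℤ → Bool, and suppose p is a Celtic configuration in (X, t). Then for every height assignment h, it is not the case that all four crossings p, p+(1,0), p+(0,1), p+(1,1) are resolved with respect to h. (This is the 'only if' direction of the main theorem: a lattice diagram containing a Celtic configuration is not the projection of a proper lattice stick knot or link, proved by deriving a cyclic chain of strict height inequalities around the configuration.) -/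
/-- If `p` is a Celtic configuration in `(X, t)`, then no height assignment
resolves all four crossings of the configuration. -/
theorem celtic_not_all_resolved
    (X : Set (ℤ × ℤ)) (t : ℤ × ℤ → Bool) (p : ℤ × ℤ) (hp : IsCeltic X t p)
    (h : ℤ × ℤ → ℤ × ℤ → ℤ) (hsym : ∀ a b, h a b = h b a) :
    ¬ (Resolved t h p ∧ Resolved t h (p + (1, 0)) ∧ Resolved t h (p + (0, 1)) ∧
        Resolved t h (p + (1, 1))) := by
  obtain ⟨-, -, -, -, h11, h10, hne⟩ := hp
  have h10t : t (p + (1, 0)) = ! t p := by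
    revert hne; cases t p <;> cases t (p + (1, 0)) <;> simp
  have h01t : t (p + (0, 1)) = ! t p := by rw [← h10]; exact h10t
  have h11t : t (p + (1, 1)) = t p := h11.symm
  rintro ⟨r1, r2, r3, r4⟩
  have e1 : p + (1, 0) + (0, 1) = p + (1, 1) := by rw [add_assoc]; norm_num
  have e2 : p + (0, 1) + (1, 0) = p + (1, 1) := by rw [add_assoc]; norm_num
  have e3 : p + (1, 0) - (1, 0) = p := by ring
  have e4 : p + (0, 1) - (0, 1) = p := by ring
  have e5 : p + (1, 1) - (0, 1) = p + (1, 0) := by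
    rw [sub_eq_iff_eq_add, add_assoc]; norm_num
  have e6 : p + (1, 1) - (1, 0) = p + (0, 1) := by
    rw [sub_eq_iff_eq_add, add_assoc]; norm_num
  unfold Resolved at r1 r2 r3 r4
  rw [e1, e3, h10t] at r2
  rw [e2, e4, h01t] at r3
  rw [e5, e6, h11t] at r4
  cases ht : t p <;> rw [ht] at r1 r2 r3 r4 <;>
    simp only [Bool.not_true, Bool.not_false, if_true, if_false, Bool.false_eq_true,
      ite_true, ite_false] at r1 r2 r3 r4 <;>
  · obtain ⟨a1, a2, a3, a4⟩ := r1
    obtain ⟨b1, b2, b3, b4⟩ := r2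
    obtain ⟨c1, c2, c3, c4⟩ := r3
    obtain ⟨d1, d2, d3, d4⟩ := r4
    linarith [hsym p (p + (1, 0)), hsym p (p + (0, 1)),
      hsym (p + (1, 0)) (p + (1, 1)), hsym (p + (0, 1)) (p + (1, 1))]
end

section
/- Let X ⊆ ℤ × ℤ be a set of crossings with type map t : ℤ × ℤ → Bool, and let c, d ∈ X be adjacent problem crossings. Then exactly one of the following holds: either t c = t d and neither of c, d is a bad neighbor of the other, or t c ≠ t d and each of c, d is a bad neighbor of the other. -/

lemma perp_pick {a b d v : ℤ × ℤ} (ha : Adjacent a v) (hb : Adjacent b v)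
    (hp : Perp (a - v) (b - v)) (hd : Adjacent d v) :
    Perp (a - v) (d - v) ∨ Perp (b - v) (d - v) := by
  obtain h1|h1|h1|h1 := ha <;> obtain h2|h2|h2|h2 := hb <;> obtain h3|h3|h3|h3 := hd <;>
    rw [h1, h2] at hp <;> rw [h1, h2, h3] <;> simp [Perp] at hp ⊢

/-- Two adjacent problem crossings either have the same crossing type and
neither is a bad neighbor of the other, or have opposite crossing types and
each is a bad neighbor of the other; exactly one of these alternatives holds. -/
theorem adjacent_problem_crossings_dichotomy
    (X : Set (ℤ × ℤ)) (t : ℤ × ℤ → Bool) (c d : ℤ × ℤ)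
    (hc : ProblemCrossing X t c) (hd : ProblemCrossing X t d) (hadj : Adjacent c d) :
    Xor' (t c = t d ∧ ¬ BadNeighbor X t c d ∧ ¬ BadNeighbor X t d c)
      (t c ≠ t d ∧ BadNeighbor X t c d ∧ BadNeighbor X t d c) := by
  by_cases heq : t c = t d
  · exact Or.inl ⟨⟨heq, fun h => h.2.2.2.1 heq.symm, fun h => h.2.2.2.1 heq⟩,
      fun h => h.1 heq⟩
  · refine Or.inr ⟨⟨heq, ?_, ?_⟩, fun h => heq h.1⟩
    · obtain ⟨hcX, a, b, haX, hbX, hab, hac, hbc, hperp, hta, htb⟩ := hc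
      refine ⟨hcX, hd.1, adjacent_symm hadj, fun h => heq h.symm, ?_⟩
      rcases perp_pick hac hbc hperp (adjacent_symm hadj) with h | h
      · exact ⟨a, haX, hac, h, hta⟩
      · exact ⟨b, hbX, hbc, h, htb⟩
    · obtain ⟨hdX, a, b, haX, hbX, hab, had, hbd, hperp, hta, htb⟩ := hd
      refine ⟨hdX, hc.1, hadj, heq, ?_⟩
      rcases perp_pick had hbd hperp hadj with h | h
      · exact ⟨a, haX, had, h, hta⟩
      · exact ⟨b, hbX, hbd, h, htb⟩
end

section
/- Let X ⊆ ℤ × ℤ be a set of crossings with type map t : ℤ × ℤ → Bool, and suppose the four vertices p, p+(1,0), p+(0,1), p+(1,1) of a unit square all lie in X. If at least two of these four vertices are problem crossings each having its two square-adjacent crossings among the four as bad neighbors, then all four vertices are problem crossings and p is a Celtic configuration. -/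
lemma boolNe {a b c : Bool} (h1 : a ≠ b) (h2 : c ≠ b) : a = c := by
  cases a <;> cases b <;> cases c <;> simp_all

lemma adj_aux {p q : ℤ × ℤ} (h : p - q = (1, 0) ∨ p - q = (-1, 0) ∨ p - q = (0, 1) ∨ p - q = (0, -1)) : Adjacent p q := h

lemma square_key
    (X : Set (ℤ × ℤ)) (t : ℤ × ℤ → Bool) (p : ℤ × ℤ)
    (h0 : p ∈ X) (h1 : p + (1, 0) ∈ X) (h2 : p + (0, 1) ∈ X) (h3 : p + (1, 1) ∈ X)
    (hb : t (p + (1, 0)) ≠ t p) (hc : t (p + (0, 1)) ≠ t p)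
    (hd : t (p + (1, 1)) = t p) :
    (ProblemCrossing X t p ∧ ProblemCrossing X t (p + (1, 0)) ∧
      ProblemCrossing X t (p + (0, 1)) ∧ ProblemCrossing X t (p + (1, 1))) ∧
      IsCeltic X t p := by
  have hbc : t (p + (1, 0)) = t (p + (0, 1)) := by
    revert hb hc; cases t p <;> cases t (p + (1, 0)) <;> cases t (p + (0, 1)) <;> simp
  have ne1 : p + (1, 0) ≠ p + (0, 1) := by
    simp [Prod.ext_iff]
  have ne2 : p ≠ p + (1, 1) := by
    intro h; have := congrArg Prod.fst h; simp at this
  have adj1 : Adjacent (p + (1, 0)) p := by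
    apply adj_aux; left; simp
  have adj2 : Adjacent (p + (0, 1)) p := by
    apply adj_aux; right; right; left; simp
  have adj3 : Adjacent p (p + (1, 0)) := by
    apply adj_aux; right; left
    simp [Prod.ext_iff, Prod.fst_sub, Prod.snd_sub]
  have adj4 : Adjacent (p + (1, 1)) (p + (1, 0)) := by
    apply adj_aux; right; right; left
    simp [Prod.ext_iff, Prod.fst_sub, Prod.snd_sub]
  have adj5 : Adjacent p (p + (0, 1)) := by
    apply adj_aux; right; right; right
    simp [Prod.ext_iff, Prod.fst_sub, Prod.snd_sub]
  have adj6 : Adjacent (p + (1, 1)) (p + (0, 1)) := by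
    apply adj_aux; left
    simp [Prod.ext_iff, Prod.fst_sub, Prod.snd_sub]
  have adj7 : Adjacent (p + (1, 0)) (p + (1, 1)) := by
    apply adj_aux; right; right; right
    simp [Prod.ext_iff, Prod.fst_sub, Prod.snd_sub]
  have adj8 : Adjacent (p + (0, 1)) (p + (1, 1)) := by
    apply adj_aux; right; left
    simp [Prod.ext_iff, Prod.fst_sub, Prod.snd_sub]
  have hbp : t p ≠ t (p + (1, 0)) := hb.symm
  have hdp : t (p + (1, 1)) ≠ t (p + (1, 0)) := by rw [hd]; exact hb.symm
  have hcp : t p ≠ t (p + (0, 1)) := hc.symm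
  have hdc : t (p + (1, 1)) ≠ t (p + (0, 1)) := by rw [hd]; exact hc.symm
  have hb' : t (p + (1, 0)) ≠ t (p + (1, 1)) := by rw [hd]; exact hb
  have hc' : t (p + (0, 1)) ≠ t (p + (1, 1)) := by rw [hd]; exact hc
  refine ⟨⟨⟨h0, p + (1, 0), p + (0, 1), h1, h2, ne1, adj1, adj2, ?_, hb, hc⟩,
    ⟨h1, p, p + (1, 1), h0, h3, ne2, adj3, adj4, ?_, hbp, hdp⟩,
    ⟨h2, p, p + (1, 1), h0, h3, ne2, adj5, adj6, ?_, hcp, hdc⟩,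
    ⟨h3, p + (1, 0), p + (0, 1), h1, h2, ne1, adj7, adj8, ?_, hb', hc'⟩⟩,
    h0, h1, h2, h3, hd.symm, hbc, hb.symm⟩ <;>
    simp [Perp, Prod.fst_sub, Prod.snd_sub]

/-- If at least two of the four vertices of a unit square of crossings are
problem crossings having their two square-adjacent crossings among their bad
neighbors, then all four vertices are problem crossings and the square is a
Celtic configuration. -/
theorem square_two_problem_implies_celtic
    (X : Set (ℤ × ℤ)) (t : ℤ × ℤ → Bool) (p : ℤ × ℤ)
    (h0 : p ∈ X) (h1 : p + (1, 0) ∈ X) (h2 : p + (0, 1) ∈ X) (h3 : p + (1, 1) ∈ X)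
    (htwo :
      (ProblemCrossing X t p ∧
          BadNeighbor X t p (p + (1, 0)) ∧ BadNeighbor X t p (p + (0, 1))) ∧
        (ProblemCrossing X t (p + (1, 0)) ∧
          BadNeighbor X t (p + (1, 0)) p ∧ BadNeighbor X t (p + (1, 0)) (p + (1, 1))) ∨
      (ProblemCrossing X t p ∧
          BadNeighbor X t p (p + (1, 0)) ∧ BadNeighbor X t p (p + (0, 1))) ∧
        (ProblemCrossing X t (p + (0, 1)) ∧
          BadNeighbor X t (p + (0, 1)) p ∧ BadNeighbor X t (p + (0, 1)) (p + (1, 1))) ∨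
      (ProblemCrossing X t p ∧
          BadNeighbor X t p (p + (1, 0)) ∧ BadNeighbor X t p (p + (0, 1))) ∧
        (ProblemCrossing X t (p + (1, 1)) ∧
          BadNeighbor X t (p + (1, 1)) (p + (1, 0)) ∧ BadNeighbor X t (p + (1, 1)) (p + (0, 1))) ∨
      (ProblemCrossing X t (p + (1, 0)) ∧
          BadNeighbor X t (p + (1, 0)) p ∧ BadNeighbor X t (p + (1, 0)) (p + (1, 1))) ∧
        (ProblemCrossing X t (p + (0, 1)) ∧
          BadNeighbor X t (p + (0, 1)) p ∧ BadNeighbor X t (p + (0, 1)) (p + (1, 1))) ∨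
      (ProblemCrossing X t (p + (1, 0)) ∧
          BadNeighbor X t (p + (1, 0)) p ∧ BadNeighbor X t (p + (1, 0)) (p + (1, 1))) ∧
        (ProblemCrossing X t (p + (1, 1)) ∧
          BadNeighbor X t (p + (1, 1)) (p + (1, 0)) ∧ BadNeighbor X t (p + (1, 1)) (p + (0, 1))) ∨
      (ProblemCrossing X t (p + (0, 1)) ∧
          BadNeighbor X t (p + (0, 1)) p ∧ BadNeighbor X t (p + (0, 1)) (p + (1, 1))) ∧
        (ProblemCrossing X t (p + (1, 1)) ∧
          BadNeighbor X t (p + (1, 1)) (p + (1, 0)) ∧ BadNeighbor X t (p + (1, 1)) (p + (0, 1)))) :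
    (ProblemCrossing X t p ∧ ProblemCrossing X t (p + (1, 0)) ∧
      ProblemCrossing X t (p + (0, 1)) ∧ ProblemCrossing X t (p + (1, 1))) ∧
      IsCeltic X t p := by
  rcases htwo with ⟨⟨_, bA, bB⟩, ⟨_, _, bD⟩⟩ | ⟨⟨_, bA, bB⟩, ⟨_, _, bD⟩⟩ |
    ⟨⟨_, bA, bB⟩, ⟨_, bC, _⟩⟩ | ⟨⟨_, bA, bB⟩, ⟨_, bC, bD⟩⟩ |
    ⟨⟨_, bA, bB⟩, ⟨_, _, bD⟩⟩ | ⟨⟨_, bA, bB⟩, ⟨_, bC, _⟩⟩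
  · exact square_key X t p h0 h1 h2 h3 bA.2.2.2.1 bB.2.2.2.1
      (boolNe bD.2.2.2.1 bA.2.2.2.1.symm)
  · exact square_key X t p h0 h1 h2 h3 bA.2.2.2.1 bB.2.2.2.1
      (boolNe bD.2.2.2.1 bB.2.2.2.1.symm)
  · exact square_key X t p h0 h1 h2 h3 bA.2.2.2.1 bB.2.2.2.1
      (boolNe bC.2.2.2.1.symm bA.2.2.2.1.symm)
  · exact square_key X t p h0 h1 h2 h3 bA.2.2.2.1.symm bC.2.2.2.1.symm
      (boolNe bB.2.2.2.1 bA.2.2.2.1)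
  · have hd : t (p + (1, 1)) = t p := boolNe bB.2.2.2.1 bA.2.2.2.1
    exact square_key X t p h0 h1 h2 h3 bA.2.2.2.1.symm
      (fun h => bD.2.2.2.1 (h.trans hd.symm)) hd
  · have hd : t (p + (1, 1)) = t p := boolNe bB.2.2.2.1 bA.2.2.2.1
    exact square_key X t p h0 h1 h2 h3
      (fun h => bC.2.2.2.1 (h.trans hd.symm)) bA.2.2.2.1.symm hd
end

section
/- Let X ⊆ ℤ × ℤ be a set of crossings with type map t : ℤ × ℤ → Bool. If v, w ∈ X are problem crossings that are adjacent in ℤ × ℤ (hence adjacent in the crossing graph) but are not joined by an edge of the problem crossing graph, then neither of v, w is a bad neighbor of the other, and t v = t w. -/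
lemma bad_of_problem {X : Set (ℤ × ℤ)} {t : ℤ × ℤ → Bool} {v w : ℤ × ℤ}
    (hv : ProblemCrossing X t v) (hwX : w ∈ X) (hadj : Adjacent w v)
    (ht : t w ≠ t v) : BadNeighbor X t v w := by
  obtain ⟨hvX, a, b, haX, hbX, hab, haa, hba, hperp, hta, htb⟩ := hv
  refine ⟨hvX, hwX, hadj, ht, ?_⟩
  have haa' := haa; have hba' := hba
  rcases haa with h1 | h1 | h1 | h1 <;> rcases hba with h2 | h2 | h2 | h2 <;>
    rcases hadj with h3 | h3 | h3 | h3 <;>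
    first
      | (refine ⟨a, haX, haa', ?_, hta⟩; simp [Perp, h1, h3]; done)
      | (refine ⟨b, hbX, hba', ?_, htb⟩; simp [Perp, h2, h3]; done)
      | (rw [h1, h2] at hperp; simp [Perp] at hperp; done)

/-- If two problem crossings are adjacent in the lattice (hence in the crossing
graph) but not joined by an edge of the problem crossing graph, then neither is
a bad neighbor of the other and they have the same crossing type. -/
theorem adjacent_problem_not_pcg_edge
    (X : Set (ℤ × ℤ)) (t : ℤ × ℤ → Bool) (v w : ℤ × ℤ)
    (hv : ProblemCrossing X t v) (hw : ProblemCrossing X t w)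
    (hadj : Adjacent v w) (hnot : ¬ (ProblemGraph X t).Adj v w) :
    ¬ BadNeighbor X t v w ∧ ¬ BadNeighbor X t w v ∧ t v = t w := by
  have hne : v ≠ w := by
    intro h; subst h
    rcases hadj with h | h | h | h <;> simp [sub_self, Prod.ext_iff] at h
  have key : t v = t w := by
    by_contra hne'
    exact hnot ⟨hne, hv, hw, hadj,
      bad_of_problem hv hw.1 (adjacent_symm hadj) (fun h => hne' h.symm),
      bad_of_problem hw hv.1 hadj (fun h => hne' h)⟩
  exact ⟨fun h => h.2.2.2.1 key.symm, fun h => h.2.2.2.1 key, key⟩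
end

section
/- Let X ⊆ ℤ × ℤ be a set of crossings with type map t : ℤ × ℤ → Bool. If (X, t) has no Celtic configuration, then the problem crossing graph of (X, t) is deleted-square free: there is no unit square in the ℤ² lattice three of whose four sides are edges of the problem crossing graph. -/
/-- If `(X, t)` has no Celtic configuration, then the problem crossing graph is
deleted-square free: no unit square has three of its four sides as edges. -/
theorem problemGraph_deleted_square_free
    (X : Set (ℤ × ℤ)) (t : ℤ × ℤ → Bool)
    (hcc : ¬ ∃ p : ℤ × ℤ, IsCeltic X t p) :
    ¬ ∃ p : ℤ × ℤ,
      ((ProblemGraph X t).Adj p (p + (1, 0)) ∧ (ProblemGraph X t).Adj p (p + (0, 1)) ∧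
        (ProblemGraph X t).Adj (p + (1, 0)) (p + (1, 1))) ∨
      ((ProblemGraph X t).Adj p (p + (1, 0)) ∧ (ProblemGraph X t).Adj p (p + (0, 1)) ∧
        (ProblemGraph X t).Adj (p + (0, 1)) (p + (1, 1))) ∨
      ((ProblemGraph X t).Adj p (p + (1, 0)) ∧ (ProblemGraph X t).Adj (p + (1, 0)) (p + (1, 1)) ∧
        (ProblemGraph X t).Adj (p + (0, 1)) (p + (1, 1))) ∨
      ((ProblemGraph X t).Adj p (p + (0, 1)) ∧ (ProblemGraph X t).Adj (p + (1, 0)) (p + (1, 1)) ∧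
        (ProblemGraph X t).Adj (p + (0, 1)) (p + (1, 1))) := by
  rintro ⟨p, hsq⟩
  apply hcc
  have key : ∀ v w : ℤ × ℤ, (ProblemGraph X t).Adj v w →
      v ∈ X ∧ w ∈ X ∧ t w ≠ t v := by
    rintro v w ⟨-, ⟨hv, -⟩, ⟨hw, -⟩, -, ⟨-, -, -, hne, -⟩, -⟩
    exact ⟨hv, hw, hne⟩
  refine ⟨p, ?_⟩
  rcases hsq with ⟨h1, h2, h3⟩ | ⟨h1, h2, h3⟩ | ⟨h1, h2, h3⟩ | ⟨h1, h2, h3⟩ <;>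
    obtain ⟨m1, m1', e1⟩ := key _ _ h1 <;>
    obtain ⟨m2, m2', e2⟩ := key _ _ h2 <;>
    obtain ⟨m3, m3', e3⟩ := key _ _ h3 <;>
    refine ⟨by assumption, by assumption, by assumption, by assumption, ?_, ?_, ?_⟩ <;>
    · revert e1 e2 e3
      cases t p <;> cases t (p + (1, 0)) <;> cases t (p + (0, 1)) <;>
        cases t (p + (1, 1)) <;> simp
end

section
/- Let X ⊆ ℤ × ℤ be a finite set of crossings with type map t : ℤ × ℤ → Bool, and suppose (X, t) has no Celtic configuration. Then every connected component of the problem crossing graph of (X, t) that is a lattice simple closed curve (i.e., a nonempty finite connected component in which every vertex has degree exactly 2) contains a vertex that is not a corner of the problem crossing graph. -/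
/-- `v` has exactly two neighbors in `G` (degree exactly 2). -/
def DegreeTwo (G : SimpleGraph (ℤ × ℤ)) (v : ℤ × ℤ) : Prop :=
  ∃ a b : ℤ × ℤ, a ≠ b ∧ G.Adj v a ∧ G.Adj v b ∧ ∀ c : ℤ × ℤ, G.Adj v c → c = a ∨ c = b

/-- `v` is a corner of `G`: it has exactly two neighbors and they lie in
perpendicular directions from `v`. -/
def GraphCorner (G : SimpleGraph (ℤ × ℤ)) (v : ℤ × ℤ) : Prop :=
  ∃ a b : ℤ × ℤ, a ≠ b ∧ G.Adj v a ∧ G.Adj v b ∧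
    (∀ c : ℤ × ℤ, G.Adj v c → c = a ∨ c = b) ∧ Perp (a - v) (b - v)

lemma pg_adj_facts {X : Set (ℤ × ℤ)} {t : ℤ × ℤ → Bool} {v w : ℤ × ℤ}
    (h : (ProblemGraph X t).Adj v w) :
    v ∈ X ∧ w ∈ X ∧ t v ≠ t w ∧
      (w = v + (1,0) ∨ w = v + (-1,0) ∨ w = v + (0,1) ∨ w = v + (0,-1)) := by
  obtain ⟨_, hv, hw, hadj, hbn, _⟩ := h
  refine ⟨hv.1, hw.1, fun he => hbn.2.2.2.1 he.symm, ?_⟩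
  simp only [Adjacent, Prod.ext_iff, Prod.fst_sub, Prod.snd_sub, Prod.fst_add,
    Prod.snd_add] at hadj ⊢
  omega

lemma pg_mem_supp_of_adj {X : Set (ℤ × ℤ)} {t : ℤ × ℤ → Bool}
    {C : (ProblemGraph X t).ConnectedComponent} {v w : ℤ × ℤ}
    (hv : v ∈ C.supp) (h : (ProblemGraph X t).Adj v w) : w ∈ C.supp := by
  rw [SimpleGraph.ConnectedComponent.mem_supp_iff] at hv ⊢
  rw [← hv]
  exact SimpleGraph.ConnectedComponent.sound h.symm.reachable

/-- If `(X, t)` has no Celtic configuration, then every connected component of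
the problem crossing graph that is a lattice simple closed curve (finite, with
every vertex of degree exactly 2) contains a vertex that is not a corner. -/
theorem cycle_component_has_noncorner
    (X : Set (ℤ × ℤ)) (hX : X.Finite) (t : ℤ × ℤ → Bool)
    (hcc : ¬ ∃ p : ℤ × ℤ, IsCeltic X t p)
    (C : (ProblemGraph X t).ConnectedComponent)
    (hfin : C.supp.Finite)
    (hdeg : ∀ v ∈ C.supp, DegreeTwo (ProblemGraph X t) v) :
    ∃ v ∈ C.supp, ¬ GraphCorner (ProblemGraph X t) v := by
  by_contra hcon
  push_neg at hcon
  -- the component is nonempty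
  obtain ⟨r, hr⟩ := C.exists_rep
  have hne : C.supp.Nonempty :=
    ⟨r, by rw [SimpleGraph.ConnectedComponent.mem_supp_iff]; exact hr⟩
  -- pick the (y, x)-lexicographically minimal vertex v
  obtain ⟨v, hv, hmin0⟩ := Set.exists_min_image C.supp (fun p => toLex (p.2, p.1)) hfin hne
  have hmin : ∀ b ∈ C.supp, v.2 < b.2 ∨ (v.2 = b.2 ∧ v.1 ≤ b.1) := by
    intro b hb
    have := hmin0 b hb
    rwa [Prod.Lex.le_iff] at this
  -- v is a corner with two neighbors a, b
  obtain ⟨a, b, hab, hva, hvb, _, _⟩ := hcon v hv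
  have haS := pg_mem_supp_of_adj hv hva
  have hbS := pg_mem_supp_of_adj hv hvb
  have hadir := (pg_adj_facts hva).2.2.2
  have hbdir := (pg_adj_facts hvb).2.2.2
  -- minimality rules out the directions (-1,0) and (0,-1)
  have key : ∀ c : ℤ × ℤ, c ∈ C.supp →
      (c = v + (1,0) ∨ c = v + (-1,0) ∨ c = v + (0,1) ∨ c = v + (0,-1)) →
      c = v + (1,0) ∨ c = v + (0,1) := by
    intro c hcS hdir
    have hm := hmin c hcS
    rcases hdir with h | h | h | h
    · exact Or.inl h
    · exfalso; subst h
      simp only [Prod.fst_add, Prod.snd_add] at hm; omega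
    · exact Or.inr h
    · exfalso; subst h
      simp only [Prod.fst_add, Prod.snd_add] at hm; omega
  have ha2 := key a haS hadir
  have hb2 := key b hbS hbdir
  -- so the neighbors of v are exactly v+(1,0) and v+(0,1)
  have hmain : (ProblemGraph X t).Adj v (v + (1,0)) ∧ (ProblemGraph X t).Adj v (v + (0,1)) := by
    rcases ha2 with ha | ha <;> rcases hb2 with hb | hb
    · exact absurd (ha.trans hb.symm) hab
    · exact ⟨ha ▸ hva, hb ▸ hvb⟩
    · exact ⟨hb ▸ hvb, ha ▸ hva⟩
    · exact absurd (ha.trans hb.symm) hab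
  obtain ⟨h10, h01⟩ := hmain
  set w := v + (1,0) with hw
  have hwS := pg_mem_supp_of_adj hv h10
  -- w is a corner; one of its neighbors is v, call the other c
  obtain ⟨a', b', hab', hwa', hwb', hall', hperp'⟩ := hcon w hwS
  have hvcase := hall' v h10.symm
  -- produce the other neighbor c of w together with its data
  have hcex : ∃ c : ℤ × ℤ, (ProblemGraph X t).Adj w c ∧ Perp (v - w) (c - w) := by
    rcases hvcase with h | h
    · exact ⟨b', hwb', h ▸ hperp'⟩
    · refine ⟨a', hwa', ?_⟩
      have : Perp (a' - w) (b' - w) := hperp'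
      rw [← h] at this
      unfold Perp at this ⊢; linarith
  obtain ⟨c, hwc, hperp⟩ := hcex
  have hcS := pg_mem_supp_of_adj hwS hwc
  have hcdir := (pg_adj_facts hwc).2.2.2
  -- perpendicularity forces c vertical from w; minimality rules out downward
  have hc : c = w + (0,1) := by
    have hm := hmin c hcS
    simp only [Perp, hw, Prod.fst_sub, Prod.snd_sub, Prod.fst_add, Prod.snd_add] at hperp
    rcases hcdir with h | h | h | h <;> subst h <;>
      simp only [Prod.ext_iff, Prod.fst_add, Prod.snd_add, hw] at hperp hm ⊢ <;> omega
  rw [hc] at hwc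
  -- collect membership and type facts
  have f10 := pg_adj_facts h10
  have f01 := pg_adj_facts h01
  have fwc := pg_adj_facts hwc
  have e11 : w + (0,1) = v + (1,1) := by
    simp only [hw, Prod.ext_iff, Prod.fst_add, Prod.snd_add]; omega
  rw [e11] at hwc fwc
  -- build the Celtic configuration at v
  refine hcc ⟨v, f10.1, f10.2.1, f01.2.1, fwc.2.1, ?_, ?_, f10.2.2.1⟩
  · have h1 : t v ≠ t (v + (1,0)) := f10.2.2.1
    have h2 : t (v + (1,0)) ≠ t (v + (1,1)) := hw ▸ fwc.2.2.1
    revert h1 h2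
    cases t v <;> cases t (v + (1,0)) <;> cases t (v + (1,1)) <;> simp
  · have h1 : t v ≠ t (v + (1,0)) := f10.2.2.1
    have h2 : t v ≠ t (v + (0,1)) := f01.2.2.1
    revert h1 h2
    cases t v <;> cases t (v + (1,0)) <;> cases t (v + (0,1)) <;> simp
end

section
/- Every deleted-square free lattice simple closed curve has a vertex that is not a corner. Precisely: let G be a nonempty finite connected simple graph on ℤ × ℤ whose edges join only adjacent points (so G is a subgraph of the ℤ² lattice) and in which every vertex has degree exactly 2. If G is deleted-square free (no unit square has three of its four sides as edges of G), then G has a vertex v whose two neighbors a, b satisfy that a − v and b − v are not perpendicular (equivalently, a − v = −(b − v)). -/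
/-- Every deleted-square free lattice simple closed curve has a vertex that is
not a corner: its two neighbors lie in non-perpendicular (i.e. opposite)
directions. -/
theorem lattice_cycle_has_noncorner
    (G : SimpleGraph (ℤ × ℤ))
    (hlat : ∀ v w : ℤ × ℤ, G.Adj v w → Adjacent v w)
    (hne : G.support.Nonempty) (hfin : G.support.Finite)
    (hdeg : ∀ v ∈ G.support, DegreeTwo G v)
    (hconn : ∀ v ∈ G.support, ∀ w ∈ G.support, G.Reachable v w)
    (hsqfree : ¬ ∃ p : ℤ × ℤ,
      (G.Adj p (p + (1, 0)) ∧ G.Adj p (p + (0, 1)) ∧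
        G.Adj (p + (1, 0)) (p + (1, 1))) ∨
      (G.Adj p (p + (1, 0)) ∧ G.Adj p (p + (0, 1)) ∧
        G.Adj (p + (0, 1)) (p + (1, 1))) ∨
      (G.Adj p (p + (1, 0)) ∧ G.Adj (p + (1, 0)) (p + (1, 1)) ∧
        G.Adj (p + (0, 1)) (p + (1, 1))) ∨
      (G.Adj p (p + (0, 1)) ∧ G.Adj (p + (1, 0)) (p + (1, 1)) ∧
        G.Adj (p + (0, 1)) (p + (1, 1)))) :
    ∃ v ∈ G.support, ∃ a b : ℤ × ℤ, a ≠ b ∧ G.Adj v a ∧ G.Adj v b ∧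
      (∀ c : ℤ × ℤ, G.Adj v c → c = a ∨ c = b) ∧ ¬ Perp (a - v) (b - v) := by
  by_contra hcon
  push_neg at hcon
  -- pick the lexicographically (y, then x) maximal vertex of the support
  obtain ⟨v, hv, hmax⟩ := Set.Finite.exists_maximalFor
    (fun q : ℤ × ℤ => toLex (q.2, q.1)) _ hfin hne
  have hle : ∀ c ∈ G.support,
      ¬ (toLex (v.2, v.1) < toLex (c.2, c.1)) := by
    intro c hcs hlt
    exact absurd (hmax hcs hlt.le) (not_le.mpr hlt)
  -- every neighbor of v is to the left or below
  have hkey : ∀ c : ℤ × ℤ, G.Adj v c →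
      c = (v.1 - 1, v.2) ∨ c = (v.1, v.2 - 1) := by
    intro c hc
    have hcs : c ∈ G.support := ⟨v, hc.symm⟩
    have hadj := hlat v c hc
    simp only [Adjacent, Prod.ext_iff, Prod.fst_sub, Prod.snd_sub] at hadj
    rcases hadj with h | h | h | h
    · left; exact Prod.ext (by omega) (by omega)
    · exfalso
      exact hle c hcs (by rw [Prod.Lex.lt_iff]; simp; omega)
    · right; exact Prod.ext (by omega) (by omega)
    · exfalso
      exact hle c hcs (by rw [Prod.Lex.lt_iff]; simp; omega)
  obtain ⟨a, b, hab, hva, hvb, hall⟩ := hdeg v hv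
  -- the two neighbors of v are exactly left and down
  have hvL : G.Adj v (v.1 - 1, v.2) ∧ G.Adj v (v.1, v.2 - 1) := by
    rcases hkey a hva with ha | ha <;> rcases hkey b hvb with hb | hb
    · exact absurd (ha.trans hb.symm) hab
    · exact ⟨ha ▸ hva, hb ▸ hvb⟩
    · exact ⟨hb ▸ hvb, ha ▸ hva⟩
    · exact absurd (ha.trans hb.symm) hab
  obtain ⟨hL, hD⟩ := hvL
  set a' : ℤ × ℤ := (v.1 - 1, v.2) with ha'
  have ha's : a' ∈ G.support := ⟨v, hL.symm⟩
  obtain ⟨c, d, hcd, hac, had, hall'⟩ := hdeg a' ha's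
  have hperp : Perp (c - a') (d - a') :=
    hcon a' ha's c d hcd hac had hall'
  have hva' : G.Adj a' v := hL.symm
  -- w : the other neighbor of a'
  have hw : ∃ w : ℤ × ℤ, G.Adj a' w ∧ Perp (v - a') (w - a') := by
    rcases hall' v hva' with h | h
    · exact ⟨d, had, h ▸ hperp⟩
    · refine ⟨c, hac, ?_⟩
      have : Perp (d - a') (c - a') := by
        simp only [Perp] at hperp ⊢; linarith
      exact h ▸ this
  obtain ⟨w, haw, hwperp⟩ := hw
  have hws : w ∈ G.support := ⟨a', haw.symm⟩
  have hadj := hlat a' w haw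
  simp only [Adjacent, Prod.ext_iff, Prod.fst_sub, Prod.snd_sub] at hadj
  simp only [Perp, Prod.fst_sub, Prod.snd_sub, ha'] at hwperp
  -- w is directly below a'
  have ha1 : a'.1 = v.1 - 1 := by rw [ha']
  have ha2 : a'.2 = v.2 := by rw [ha']
  have hwval : w = (v.1 - 1, v.2 - 1) := by
    rcases hadj with h | h | h | h
    · exfalso; simp at hwperp; omega
    · exfalso; simp at hwperp; omega
    · exact Prod.ext (by simp; omega) (by simp; omega)
    · exfalso
      exact hle w hws (by rw [Prod.Lex.lt_iff]; left; simp at *; omega)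
  -- contradiction with square-freeness at p = v - (1,1)
  refine hsqfree ⟨(v.1 - 1, v.2 - 1), Or.inr (Or.inr (Or.inr ⟨?_, ?_, ?_⟩))⟩
  · have e : ((v.1 - 1 : ℤ), (v.2 - 1 : ℤ)) + (0, 1) = a' := by
      simp [ha', Prod.ext_iff]
    rw [e, ← hwval]
    exact haw.symm
  · have e1 : ((v.1 - 1 : ℤ), (v.2 - 1 : ℤ)) + (1, 0) = (v.1, v.2 - 1) := by
      simp [Prod.ext_iff]
    have e2 : ((v.1 - 1 : ℤ), (v.2 - 1 : ℤ)) + (1, 1) = v := by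
      simp [Prod.ext_iff]
    rw [e1, e2]
    exact hD.symm
  · have e1 : ((v.1 - 1 : ℤ), (v.2 - 1 : ℤ)) + (0, 1) = a' := by
      simp [ha', Prod.ext_iff]
    have e2 : ((v.1 - 1 : ℤ), (v.2 - 1 : ℤ)) + (1, 1) = v := by
      simp [Prod.ext_iff]
    rw [e1, e2]
    exact hva'
end

section
/- Let X ⊆ ℤ × ℤ be a set of crossings with type map t : ℤ × ℤ → Bool, and let v ∈ X be a crossing that is NOT a problem crossing. Then for every height assignment h there exists a height assignment h' and a direction d ∈ {(1,0), (0,1)} such that: h' agrees with h on all unit edges except possibly the two edges joining v to v + d and to v − d, on which h' takes a single common value; v is resolved with respect to h'; and every crossing of X that is resolved with respect to h is still resolved with respect to h'. (This is Observation (2) in the proof of the main theorem: at a non-problem crossing a backwards compatible proper lift always exists.) -/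
/-- Auxiliary: resolvedness phrased with explicit strong axis `s` and weak axis `e`. -/
def Res (h : ℤ × ℤ → ℤ × ℤ → ℤ) (v s e : ℤ × ℤ) : Prop :=
  h v (v + e) < h v (v + s) ∧ h v (v + e) < h v (v - s) ∧
  h v (v - e) < h v (v + s) ∧ h v (v - e) < h v (v - s)

lemma res_iff (t : ℤ × ℤ → Bool) (h : ℤ × ℤ → ℤ × ℤ → ℤ) (w d o : ℤ × ℤ)
    (hdo : (d = ((1:ℤ),(0:ℤ)) ∧ o = ((0:ℤ),(1:ℤ))) ∨ (d = ((0:ℤ),(1:ℤ)) ∧ o = ((1:ℤ),(0:ℤ))))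
    (hw : (if t w then ((1:ℤ),(0:ℤ)) else ((0:ℤ),(1:ℤ))) = d) :
    Resolved t h w ↔ Res h w d o := by
  rcases hdo with ⟨rfl, rfl⟩ | ⟨rfl, rfl⟩ <;> cases htw : t w <;> rw [htw] at hw <;>
    simp only [if_true, if_false, Bool.false_eq_true, Prod.mk.injEq] at hw <;>
    simp [Resolved, Res, htw] <;> omega

/-- Modify `h` on the two edges from `v` in direction `d`, giving them value `c`. -/
def modE (h : ℤ × ℤ → ℤ × ℤ → ℤ) (v d : ℤ × ℤ) (c : ℤ) : ℤ × ℤ → ℤ × ℤ → ℤ :=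
  fun p q =>
    if (p = v ∧ q = v + d) ∨ (p = v + d ∧ q = v) ∨ (p = v ∧ q = v - d) ∨ (p = v - d ∧ q = v)
    then c else h p q

lemma modE_pos (h : ℤ × ℤ → ℤ × ℤ → ℤ) (v d : ℤ × ℤ) (c : ℤ) {p q : ℤ × ℤ}
    (hpq : (p = v ∧ q = v + d) ∨ (p = v + d ∧ q = v) ∨ (p = v ∧ q = v - d) ∨ (p = v - d ∧ q = v)) :
    modE h v d c p q = c := if_pos hpq

lemma modE_neg (h : ℤ × ℤ → ℤ × ℤ → ℤ) (v d : ℤ × ℤ) (c : ℤ) {p q : ℤ × ℤ}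
    (hpq : ¬ ((p = v ∧ q = v + d) ∨ (p = v + d ∧ q = v) ∨ (p = v ∧ q = v - d) ∨ (p = v - d ∧ q = v))) :
    modE h v d c p q = h p q := if_neg hpq

lemma modE_symm (h : ℤ × ℤ → ℤ × ℤ → ℤ) (v d : ℤ × ℤ) (c : ℤ)
    (hsym : ∀ p q, h p q = h q p) (p q : ℤ × ℤ) :
    modE h v d c p q = modE h v d c q p := by
  unfold modE
  by_cases hc : (p = v ∧ q = v + d) ∨ (p = v + d ∧ q = v) ∨ (p = v ∧ q = v - d) ∨ (p = v - d ∧ q = v)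
  · rw [if_pos hc, if_pos (by tauto)]
  · rw [if_neg hc, if_neg (by tauto), hsym]

lemma modE_far (h : ℤ × ℤ → ℤ × ℤ → ℤ) (v d : ℤ × ℤ) (c : ℤ) {w : ℤ × ℤ}
    (h1 : w ≠ v) (h2 : w ≠ v + d) (h3 : w ≠ v - d) (q : ℤ × ℤ) :
    modE h v d c w q = h w q := by
  refine modE_neg h v d c ?_
  rintro (⟨hp, _⟩ | ⟨hp, _⟩ | ⟨hp, _⟩ | ⟨hp, _⟩)
  exacts [h1 hp, h2 hp, h1 hp, h3 hp]

lemma raise_aux (X : Set (ℤ × ℤ)) (t : ℤ × ℤ → Bool) (v : ℤ × ℤ)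
    (h : ℤ × ℤ → ℤ × ℤ → ℤ) (hsym : ∀ p q, h p q = h q p) (d o : ℤ × ℤ)
    (hdo : (d = ((1:ℤ),(0:ℤ)) ∧ o = ((0:ℤ),(1:ℤ))) ∨ (d = ((0:ℤ),(1:ℤ)) ∧ o = ((1:ℤ),(0:ℤ))))
    (hsv : (if t v then ((1:ℤ),(0:ℤ)) else ((0:ℤ),(1:ℤ))) = d)
    (hS : ∀ w ∈ X, (w = v + d ∨ w = v - d) → t w = t v) :
    ∃ h' : ℤ × ℤ → ℤ × ℤ → ℤ,
      (∀ p q, h' p q = h' q p) ∧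
      (∃ c : ℤ, h' v (v + d) = c ∧ h' v (v - d) = c) ∧
      (∀ p q : ℤ × ℤ,
        ¬ ((p = v ∧ q = v + d) ∨ (p = v + d ∧ q = v) ∨
            (p = v ∧ q = v - d) ∨ (p = v - d ∧ q = v)) → h' p q = h p q) ∧
      Resolved t h' v ∧
      (∀ w ∈ X, Resolved t h w → Resolved t h' w) := by
  obtain ⟨N1, N2, N3, N4, N5, N6, N7, N8, N9, N10, N11, N12, N13⟩ :
      (v ≠ v + d) ∧ (v ≠ v - d) ∧ (v + d ≠ v - d) ∧
      (v + o ≠ v + d) ∧ (v + o ≠ v - d) ∧ (v - o ≠ v + d) ∧ (v - o ≠ v - d) ∧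
      (v + d + d ≠ v) ∧ (v + d + o ≠ v) ∧ (v + d - o ≠ v) ∧
      (v - d - d ≠ v) ∧ (v - d + o ≠ v) ∧ (v - d - o ≠ v) := by
    rcases hdo with ⟨rfl, rfl⟩ | ⟨rfl, rfl⟩ <;>
      refine ⟨?_, ?_, ?_, ?_, ?_, ?_, ?_, ?_, ?_, ?_, ?_, ?_, ?_⟩ <;>
      simp [Prod.ext_iff] <;> omega
  have heq1 : v + d - d = v := by ring
  have heq2 : v - d + d = v := by ring
  set c : ℤ := max (max (h v (v + d)) (h v (v - d))) (max (h v (v + o)) (h v (v - o))) + 1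
    with hc
  have Ev1 : modE h v d c v (v + d) = c := modE_pos h v d c (Or.inl ⟨rfl, rfl⟩)
  have Ev2 : modE h v d c v (v - d) = c := modE_pos h v d c (Or.inr (Or.inr (Or.inl ⟨rfl, rfl⟩)))
  have Ev3 : modE h v d c v (v + o) = h v (v + o) := by
    refine modE_neg h v d c ?_
    rintro (⟨_, hq⟩ | ⟨hp, _⟩ | ⟨_, hq⟩ | ⟨hp, _⟩)
    exacts [N4 hq, N1 hp, N5 hq, N2 hp]
  have Ev4 : modE h v d c v (v - o) = h v (v - o) := by
    refine modE_neg h v d c ?_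
    rintro (⟨_, hq⟩ | ⟨hp, _⟩ | ⟨_, hq⟩ | ⟨hp, _⟩)
    exacts [N6 hq, N1 hp, N7 hq, N2 hp]
  have hresv : Resolved t (modE h v d c) v := by
    rw [res_iff t (modE h v d c) v d o hdo hsv]
    refine ⟨?_, ?_, ?_, ?_⟩ <;> simp only [Ev1, Ev2, Ev3, Ev4] <;> omega
  refine ⟨modE h v d c, modE_symm h v d c hsym, ⟨c, Ev1, Ev2⟩,
    fun p q hpq => modE_neg h v d c hpq, hresv, ?_⟩
  intro w hwX hres
  by_cases hw1 : w = v
  · subst hw1; exact hresv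
  by_cases hw2 : w = v + d
  · subst hw2
    have htw : t (v + d) = t v := hS _ hwX (Or.inl rfl)
    rw [res_iff t h (v + d) d o hdo (by rw [htw]; exact hsv)] at hres
    rw [res_iff t (modE h v d c) (v + d) d o hdo (by rw [htw]; exact hsv)]
    obtain ⟨r1, r2, r3, r4⟩ := hres
    rw [heq1] at r2 r4
    rw [hsym (v + d) v] at r2 r4
    have E5 : modE h v d c (v + d) (v + d + d) = h (v + d) (v + d + d) := by
      refine modE_neg h v d c ?_
      rintro (⟨hp, _⟩ | ⟨_, hq⟩ | ⟨hp, _⟩ | ⟨hp, _⟩)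
      exacts [N1 hp.symm, N8 hq, N1 hp.symm, N3 hp]
    have E6 : modE h v d c (v + d) (v + d - d) = c := by
      rw [heq1]; exact modE_pos h v d c (Or.inr (Or.inl ⟨rfl, rfl⟩))
    have E7 : modE h v d c (v + d) (v + d + o) = h (v + d) (v + d + o) := by
      refine modE_neg h v d c ?_
      rintro (⟨hp, _⟩ | ⟨_, hq⟩ | ⟨hp, _⟩ | ⟨hp, _⟩)
      exacts [N1 hp.symm, N9 hq, N1 hp.symm, N3 hp]
    have E8 : modE h v d c (v + d) (v + d - o) = h (v + d) (v + d - o) := by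
      refine modE_neg h v d c ?_
      rintro (⟨hp, _⟩ | ⟨_, hq⟩ | ⟨hp, _⟩ | ⟨hp, _⟩)
      exacts [N1 hp.symm, N10 hq, N1 hp.symm, N3 hp]
    refine ⟨?_, ?_, ?_, ?_⟩ <;> simp only [E5, E6, E7, E8] <;> omega
  by_cases hw3 : w = v - d
  · subst hw3
    have htw : t (v - d) = t v := hS _ hwX (Or.inr rfl)
    rw [res_iff t h (v - d) d o hdo (by rw [htw]; exact hsv)] at hres
    rw [res_iff t (modE h v d c) (v - d) d o hdo (by rw [htw]; exact hsv)]
    obtain ⟨r1, r2, r3, r4⟩ := hres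
    rw [heq2] at r1 r3
    rw [hsym (v - d) v] at r1 r3
    have E5 : modE h v d c (v - d) (v - d - d) = h (v - d) (v - d - d) := by
      refine modE_neg h v d c ?_
      rintro (⟨hp, _⟩ | ⟨hp, _⟩ | ⟨hp, _⟩ | ⟨_, hq⟩)
      exacts [N2 hp.symm, N3 hp.symm, N2 hp.symm, N11 hq]
    have E6 : modE h v d c (v - d) (v - d + d) = c := by
      rw [heq2]; exact modE_pos h v d c (Or.inr (Or.inr (Or.inr ⟨rfl, rfl⟩)))
    have E7 : modE h v d c (v - d) (v - d + o) = h (v - d) (v - d + o) := by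
      refine modE_neg h v d c ?_
      rintro (⟨hp, _⟩ | ⟨hp, _⟩ | ⟨hp, _⟩ | ⟨_, hq⟩)
      exacts [N2 hp.symm, N3 hp.symm, N2 hp.symm, N12 hq]
    have E8 : modE h v d c (v - d) (v - d - o) = h (v - d) (v - d - o) := by
      refine modE_neg h v d c ?_
      rintro (⟨hp, _⟩ | ⟨hp, _⟩ | ⟨hp, _⟩ | ⟨_, hq⟩)
      exacts [N2 hp.symm, N3 hp.symm, N2 hp.symm, N13 hq]
    refine ⟨?_, ?_, ?_, ?_⟩ <;> simp only [E5, E6, E7, E8] <;> omega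
  · have hfar : ∀ q, modE h v d c w q = h w q := modE_far h v d c hw1 hw2 hw3
    simp only [Resolved, hfar] at hres ⊢
    exact hres

lemma lower_aux (X : Set (ℤ × ℤ)) (t : ℤ × ℤ → Bool) (v : ℤ × ℤ)
    (h : ℤ × ℤ → ℤ × ℤ → ℤ) (hsym : ∀ p q, h p q = h q p) (d o : ℤ × ℤ)
    (hdo : (d = ((1:ℤ),(0:ℤ)) ∧ o = ((0:ℤ),(1:ℤ))) ∨ (d = ((0:ℤ),(1:ℤ)) ∧ o = ((1:ℤ),(0:ℤ))))
    (hsv : (if t v then ((1:ℤ),(0:ℤ)) else ((0:ℤ),(1:ℤ))) = o)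
    (hS : ∀ w ∈ X, (w = v + d ∨ w = v - d) → t w = t v) :
    ∃ h' : ℤ × ℤ → ℤ × ℤ → ℤ,
      (∀ p q, h' p q = h' q p) ∧
      (∃ c : ℤ, h' v (v + d) = c ∧ h' v (v - d) = c) ∧
      (∀ p q : ℤ × ℤ,
        ¬ ((p = v ∧ q = v + d) ∨ (p = v + d ∧ q = v) ∨
            (p = v ∧ q = v - d) ∨ (p = v - d ∧ q = v)) → h' p q = h p q) ∧
      Resolved t h' v ∧
      (∀ w ∈ X, Resolved t h w → Resolved t h' w) := by
  have hdo' : (o = ((1:ℤ),(0:ℤ)) ∧ d = ((0:ℤ),(1:ℤ))) ∨ (o = ((0:ℤ),(1:ℤ)) ∧ d = ((1:ℤ),(0:ℤ))) := by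
    tauto
  obtain ⟨N1, N2, N3, N4, N5, N6, N7, N8, N9, N10, N11, N12, N13⟩ :
      (v ≠ v + d) ∧ (v ≠ v - d) ∧ (v + d ≠ v - d) ∧
      (v + o ≠ v + d) ∧ (v + o ≠ v - d) ∧ (v - o ≠ v + d) ∧ (v - o ≠ v - d) ∧
      (v + d + d ≠ v) ∧ (v + d + o ≠ v) ∧ (v + d - o ≠ v) ∧
      (v - d - d ≠ v) ∧ (v - d + o ≠ v) ∧ (v - d - o ≠ v) := by
    rcases hdo with ⟨rfl, rfl⟩ | ⟨rfl, rfl⟩ <;>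
      refine ⟨?_, ?_, ?_, ?_, ?_, ?_, ?_, ?_, ?_, ?_, ?_, ?_, ?_⟩ <;>
      simp [Prod.ext_iff] <;> omega
  have heq1 : v + d - d = v := by ring
  have heq2 : v - d + d = v := by ring
  set c : ℤ := min (min (h v (v + d)) (h v (v - d))) (min (h v (v + o)) (h v (v - o))) - 1
    with hc
  have Ev1 : modE h v d c v (v + d) = c := modE_pos h v d c (Or.inl ⟨rfl, rfl⟩)
  have Ev2 : modE h v d c v (v - d) = c := modE_pos h v d c (Or.inr (Or.inr (Or.inl ⟨rfl, rfl⟩)))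
  have Ev3 : modE h v d c v (v + o) = h v (v + o) := by
    refine modE_neg h v d c ?_
    rintro (⟨_, hq⟩ | ⟨hp, _⟩ | ⟨_, hq⟩ | ⟨hp, _⟩)
    exacts [N4 hq, N1 hp, N5 hq, N2 hp]
  have Ev4 : modE h v d c v (v - o) = h v (v - o) := by
    refine modE_neg h v d c ?_
    rintro (⟨_, hq⟩ | ⟨hp, _⟩ | ⟨_, hq⟩ | ⟨hp, _⟩)
    exacts [N6 hq, N1 hp, N7 hq, N2 hp]
  have hresv : Resolved t (modE h v d c) v := by
    rw [res_iff t (modE h v d c) v o d hdo' hsv]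
    refine ⟨?_, ?_, ?_, ?_⟩ <;> simp only [Ev1, Ev2, Ev3, Ev4] <;> omega
  refine ⟨modE h v d c, modE_symm h v d c hsym, ⟨c, Ev1, Ev2⟩,
    fun p q hpq => modE_neg h v d c hpq, hresv, ?_⟩
  intro w hwX hres
  by_cases hw1 : w = v
  · subst hw1; exact hresv
  by_cases hw2 : w = v + d
  · subst hw2
    have htw : t (v + d) = t v := hS _ hwX (Or.inl rfl)
    rw [res_iff t h (v + d) o d hdo' (by rw [htw]; exact hsv)] at hres
    rw [res_iff t (modE h v d c) (v + d) o d hdo' (by rw [htw]; exact hsv)]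
    obtain ⟨r1, r2, r3, r4⟩ := hres
    rw [heq1] at r3 r4
    rw [hsym (v + d) v] at r3 r4
    have E5 : modE h v d c (v + d) (v + d + d) = h (v + d) (v + d + d) := by
      refine modE_neg h v d c ?_
      rintro (⟨hp, _⟩ | ⟨_, hq⟩ | ⟨hp, _⟩ | ⟨hp, _⟩)
      exacts [N1 hp.symm, N8 hq, N1 hp.symm, N3 hp]
    have E6 : modE h v d c (v + d) (v + d - d) = c := by
      rw [heq1]; exact modE_pos h v d c (Or.inr (Or.inl ⟨rfl, rfl⟩))
    have E7 : modE h v d c (v + d) (v + d + o) = h (v + d) (v + d + o) := by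
      refine modE_neg h v d c ?_
      rintro (⟨hp, _⟩ | ⟨_, hq⟩ | ⟨hp, _⟩ | ⟨hp, _⟩)
      exacts [N1 hp.symm, N9 hq, N1 hp.symm, N3 hp]
    have E8 : modE h v d c (v + d) (v + d - o) = h (v + d) (v + d - o) := by
      refine modE_neg h v d c ?_
      rintro (⟨hp, _⟩ | ⟨_, hq⟩ | ⟨hp, _⟩ | ⟨hp, _⟩)
      exacts [N1 hp.symm, N10 hq, N1 hp.symm, N3 hp]
    refine ⟨?_, ?_, ?_, ?_⟩ <;> simp only [E5, E6, E7, E8] <;> omega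
  by_cases hw3 : w = v - d
  · subst hw3
    have htw : t (v - d) = t v := hS _ hwX (Or.inr rfl)
    rw [res_iff t h (v - d) o d hdo' (by rw [htw]; exact hsv)] at hres
    rw [res_iff t (modE h v d c) (v - d) o d hdo' (by rw [htw]; exact hsv)]
    obtain ⟨r1, r2, r3, r4⟩ := hres
    rw [heq2] at r1 r2
    rw [hsym (v - d) v] at r1 r2
    have E5 : modE h v d c (v - d) (v - d - d) = h (v - d) (v - d - d) := by
      refine modE_neg h v d c ?_
      rintro (⟨hp, _⟩ | ⟨hp, _⟩ | ⟨hp, _⟩ | ⟨_, hq⟩)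
      exacts [N2 hp.symm, N3 hp.symm, N2 hp.symm, N11 hq]
    have E6 : modE h v d c (v - d) (v - d + d) = c := by
      rw [heq2]; exact modE_pos h v d c (Or.inr (Or.inr (Or.inr ⟨rfl, rfl⟩)))
    have E7 : modE h v d c (v - d) (v - d + o) = h (v - d) (v - d + o) := by
      refine modE_neg h v d c ?_
      rintro (⟨hp, _⟩ | ⟨hp, _⟩ | ⟨hp, _⟩ | ⟨_, hq⟩)
      exacts [N2 hp.symm, N3 hp.symm, N2 hp.symm, N12 hq]
    have E8 : modE h v d c (v - d) (v - d - o) = h (v - d) (v - d - o) := by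
      refine modE_neg h v d c ?_
      rintro (⟨hp, _⟩ | ⟨hp, _⟩ | ⟨hp, _⟩ | ⟨_, hq⟩)
      exacts [N2 hp.symm, N3 hp.symm, N2 hp.symm, N13 hq]
    refine ⟨?_, ?_, ?_, ?_⟩ <;> simp only [E5, E6, E7, E8] <;> omega
  · have hfar : ∀ q, modE h v d c w q = h w q := modE_far h v d c hw1 hw2 hw3
    simp only [Resolved, hfar] at hres ⊢
    exact hres


/-- Observation (2): at a non-problem crossing `v`, for any height assignment
there is a backwards compatible proper lift: a new height assignment changing
only the two edges from `v` in some unit direction `d` (to a single common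
value) which resolves `v` and keeps every previously resolved crossing
resolved. -/
theorem backwards_compatible_lift_at_non_problem
    (X : Set (ℤ × ℤ)) (t : ℤ × ℤ → Bool) (v : ℤ × ℤ) (hv : v ∈ X)
    (hnp : ¬ ProblemCrossing X t v)
    (h : ℤ × ℤ → ℤ × ℤ → ℤ) (hsym : ∀ p q, h p q = h q p) :
    ∃ (h' : ℤ × ℤ → ℤ × ℤ → ℤ) (d : ℤ × ℤ),
      (d = (1, 0) ∨ d = (0, 1)) ∧
      (∀ p q, h' p q = h' q p) ∧
      (∃ c : ℤ, h' v (v + d) = c ∧ h' v (v - d) = c) ∧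
      (∀ p q : ℤ × ℤ,
        ¬ ((p = v ∧ q = v + d) ∨ (p = v + d ∧ q = v) ∨
            (p = v ∧ q = v - d) ∨ (p = v - d ∧ q = v)) → h' p q = h p q) ∧
      Resolved t h' v ∧
      (∀ w ∈ X, Resolved t h w → Resolved t h' w) := by
  have hcase : (∀ w ∈ X, (w = v + ((1:ℤ),(0:ℤ)) ∨ w = v - ((1:ℤ),(0:ℤ))) → t w = t v) ∨
      (∀ w ∈ X, (w = v + ((0:ℤ),(1:ℤ)) ∨ w = v - ((0:ℤ),(1:ℤ))) → t w = t v) := by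
    by_contra hcon
    push_neg at hcon
    obtain ⟨⟨a, haX, hav, hat⟩, ⟨b, hbX, hbv, hbt⟩⟩ := hcon
    refine hnp ⟨hv, a, b, haX, hbX, ?_, ?_, ?_, ?_, hat, hbt⟩ <;>
      rcases hav with rfl | rfl <;> rcases hbv with rfl | rfl <;>
      simp [Adjacent, Perp, Prod.ext_iff] <;> omega
  rcases hcase with hS | hS
  · cases htv : t v
    · obtain ⟨h', a1, a2, a3, a4, a5⟩ :=
        lower_aux X t v h hsym (1, 0) (0, 1) (Or.inl ⟨rfl, rfl⟩) (by simp [htv]) hS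
      exact ⟨h', (1, 0), Or.inl rfl, a1, a2, a3, a4, a5⟩
    · obtain ⟨h', a1, a2, a3, a4, a5⟩ :=
        raise_aux X t v h hsym (1, 0) (0, 1) (Or.inl ⟨rfl, rfl⟩) (by simp [htv]) hS
      exact ⟨h', (1, 0), Or.inl rfl, a1, a2, a3, a4, a5⟩
  · cases htv : t v
    · obtain ⟨h', a1, a2, a3, a4, a5⟩ :=
        raise_aux X t v h hsym (0, 1) (1, 0) (Or.inr ⟨rfl, rfl⟩) (by simp [htv]) hS
      exact ⟨h', (0, 1), Or.inr rfl, a1, a2, a3, a4, a5⟩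
    · obtain ⟨h', a1, a2, a3, a4, a5⟩ :=
        lower_aux X t v h hsym (0, 1) (1, 0) (Or.inr ⟨rfl, rfl⟩) (by simp [htv]) hS
      exact ⟨h', (0, 1), Or.inr rfl, a1, a2, a3, a4, a5⟩
end

section
/- Let X ⊆ ℤ × ℤ be a set of crossings with type map t : ℤ × ℤ → Bool, let v, w ∈ X be adjacent crossings with t v = t w, and let h be a height assignment with respect to which w is resolved. Then there exists N ∈ ℤ such that for all n ≥ N both of the following modified height assignments resolve v and leave w resolved: (a) the assignment obtained from h by setting the heights of the two edges joining v to v + (1,0) and to v − (1,0) equal to n if t v = true, and equal to −n if t v = false; (b) the assignment obtained from h by setting the heights of the two edges joining v to v + (0,1) and to v − (0,1) equal to −n if t v = true, and equal to n if t v = false. (This is Observation (1) in the proof of the main theorem: if two adjacent crossings have the same crossing type, then any proper lift at one of them with sufficiently large height in absolute value is compatible with the other.) -/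
/-- The height assignment obtained from `h` by setting the heights of the two
horizontal edges at `v` to `n` if `t v = true` and to `-n` otherwise. -/
def liftX (t : ℤ × ℤ → Bool) (h : ℤ × ℤ → ℤ × ℤ → ℤ) (v : ℤ × ℤ) (n : ℤ) :
    ℤ × ℤ → ℤ × ℤ → ℤ := fun p q =>
  if (p = v ∧ (q = v + (1, 0) ∨ q = v - (1, 0))) ∨
      (q = v ∧ (p = v + (1, 0) ∨ p = v - (1, 0))) then
    (if t v then n else -n)
  else h p q

/-- The height assignment obtained from `h` by setting the heights of the two
vertical edges at `v` to `-n` if `t v = true` and to `n` otherwise. -/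
def liftY (t : ℤ × ℤ → Bool) (h : ℤ × ℤ → ℤ × ℤ → ℤ) (v : ℤ × ℤ) (n : ℤ) :
    ℤ × ℤ → ℤ × ℤ → ℤ := fun p q =>
  if (p = v ∧ (q = v + (0, 1) ∨ q = v - (0, 1))) ∨
      (q = v ∧ (p = v + (0, 1) ∨ p = v - (0, 1))) then
    (if t v then -n else n)
  else h p q

set_option maxHeartbeats 2000000 in
/-- Observation (1): if `v` and `w` are adjacent crossings of the same type and
`w` is resolved with respect to `h`, then every sufficiently large lift at `v`
(horizontal or vertical, in the appropriate direction) resolves `v` and leaves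
`w` resolved. -/
theorem lift_compatible_of_same_type
    (X : Set (ℤ × ℤ)) (t : ℤ × ℤ → Bool) (v w : ℤ × ℤ)
    (hv : v ∈ X) (hw : w ∈ X) (hadj : Adjacent v w) (htype : t v = t w)
    (h : ℤ × ℤ → ℤ × ℤ → ℤ) (hsym : ∀ p q, h p q = h q p)
    (hres : Resolved t h w) :
    ∃ N : ℤ, ∀ n : ℤ, N ≤ n →
      (Resolved t (liftX t h v n) v ∧ Resolved t (liftX t h v n) w) ∧
      (Resolved t (liftY t h v n) v ∧ Resolved t (liftY t h v n) w) := by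
  obtain ⟨h1,h2⟩|⟨h1,h2⟩|⟨h1,h2⟩|⟨h1,h2⟩ :
      (v.1 - w.1 = 1 ∧ v.2 = w.2) ∨ (v.1 - w.1 = -1 ∧ v.2 = w.2) ∨
      (v.1 = w.1 ∧ v.2 - w.2 = 1) ∨ (v.1 = w.1 ∧ v.2 - w.2 = -1) := by
    rcases hadj with h|h|h|h <;> rw [Prod.ext_iff] at h <;>
      simp [Prod.fst_sub, Prod.snd_sub] at h <;> omega
  · obtain ⟨a,b⟩ := v
    obtain ⟨c,d⟩ := w
    simp only at h1 h2
    subst h2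
    have : a = c + 1 := by omega
    subst this
    refine ⟨1 + |h (c+1,b) ((c+1,b)+(0,1))| + |h (c+1,b) ((c+1,b)-(0,1))| + |h (c+1,b) ((c+1,b)+(1,0))| + |h (c+1,b) ((c+1,b)-(1,0))| + |h (c,b) ((c,b)+(0,1))| + |h (c,b) ((c,b)-(0,1))| + |h (c,b) ((c,b)+(1,0))| + |h (c,b) ((c,b)-(1,0))|, fun n hn => ?_⟩
    have B0 := le_abs_self (h (c+1,b) ((c+1,b)+(0,1)))
    have C0 := neg_abs_le (h (c+1,b) ((c+1,b)+(0,1)))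
    have B1 := le_abs_self (h (c+1,b) ((c+1,b)-(0,1)))
    have C1 := neg_abs_le (h (c+1,b) ((c+1,b)-(0,1)))
    have B2 := le_abs_self (h (c+1,b) ((c+1,b)+(1,0)))
    have C2 := neg_abs_le (h (c+1,b) ((c+1,b)+(1,0)))
    have B3 := le_abs_self (h (c+1,b) ((c+1,b)-(1,0)))
    have C3 := neg_abs_le (h (c+1,b) ((c+1,b)-(1,0)))
    have B4 := le_abs_self (h (c,b) ((c,b)+(0,1)))
    have C4 := neg_abs_le (h (c,b) ((c,b)+(0,1)))
    have B5 := le_abs_self (h (c,b) ((c,b)-(0,1)))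
    have C5 := neg_abs_le (h (c,b) ((c,b)-(0,1)))
    have B6 := le_abs_self (h (c,b) ((c,b)+(1,0)))
    have C6 := neg_abs_le (h (c,b) ((c,b)+(1,0)))
    have B7 := le_abs_self (h (c,b) ((c,b)-(1,0)))
    have C7 := neg_abs_le (h (c,b) ((c,b)-(1,0)))
    simp only [Resolved, liftX, liftY, Prod.mk_add_mk, Prod.mk_sub_mk, Prod.mk.injEq] at *
    rcases ht : t (c+1,b) with _|_ <;> rw [ht] at htype <;> rw [← htype] at hres <;>
      simp only [ht, ← htype, if_true, if_false, Bool.false_eq_true] at * <;>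
      norm_num <;> simp_all <;> omega
  · obtain ⟨a,b⟩ := v
    obtain ⟨c,d⟩ := w
    simp only at h1 h2
    subst h2
    have : a = c - 1 := by omega
    subst this
    refine ⟨1 + |h (c-1,b) ((c-1,b)+(0,1))| + |h (c-1,b) ((c-1,b)-(0,1))| + |h (c-1,b) ((c-1,b)+(1,0))| + |h (c-1,b) ((c-1,b)-(1,0))| + |h (c,b) ((c,b)+(0,1))| + |h (c,b) ((c,b)-(0,1))| + |h (c,b) ((c,b)+(1,0))| + |h (c,b) ((c,b)-(1,0))|, fun n hn => ?_⟩
    have B0 := le_abs_self (h (c-1,b) ((c-1,b)+(0,1)))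
    have C0 := neg_abs_le (h (c-1,b) ((c-1,b)+(0,1)))
    have B1 := le_abs_self (h (c-1,b) ((c-1,b)-(0,1)))
    have C1 := neg_abs_le (h (c-1,b) ((c-1,b)-(0,1)))
    have B2 := le_abs_self (h (c-1,b) ((c-1,b)+(1,0)))
    have C2 := neg_abs_le (h (c-1,b) ((c-1,b)+(1,0)))
    have B3 := le_abs_self (h (c-1,b) ((c-1,b)-(1,0)))
    have C3 := neg_abs_le (h (c-1,b) ((c-1,b)-(1,0)))
    have B4 := le_abs_self (h (c,b) ((c,b)+(0,1)))
    have C4 := neg_abs_le (h (c,b) ((c,b)+(0,1)))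
    have B5 := le_abs_self (h (c,b) ((c,b)-(0,1)))
    have C5 := neg_abs_le (h (c,b) ((c,b)-(0,1)))
    have B6 := le_abs_self (h (c,b) ((c,b)+(1,0)))
    have C6 := neg_abs_le (h (c,b) ((c,b)+(1,0)))
    have B7 := le_abs_self (h (c,b) ((c,b)-(1,0)))
    have C7 := neg_abs_le (h (c,b) ((c,b)-(1,0)))
    simp only [Resolved, liftX, liftY, Prod.mk_add_mk, Prod.mk_sub_mk, Prod.mk.injEq] at *
    rcases ht : t (c-1,b) with _|_ <;> rw [ht] at htype <;> rw [← htype] at hres <;>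
      simp only [ht, ← htype, if_true, if_false, Bool.false_eq_true] at * <;>
      norm_num <;> simp_all <;> omega
  · obtain ⟨a,b⟩ := v
    obtain ⟨c,d⟩ := w
    simp only at h1 h2
    subst h1
    have : b = d + 1 := by omega
    subst this
    refine ⟨1 + |h (a,d+1) ((a,d+1)+(0,1))| + |h (a,d+1) ((a,d+1)-(0,1))| + |h (a,d+1) ((a,d+1)+(1,0))| + |h (a,d+1) ((a,d+1)-(1,0))| + |h (a,d) ((a,d)+(0,1))| + |h (a,d) ((a,d)-(0,1))| + |h (a,d) ((a,d)+(1,0))| + |h (a,d) ((a,d)-(1,0))|, fun n hn => ?_⟩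
    have B0 := le_abs_self (h (a,d+1) ((a,d+1)+(0,1)))
    have C0 := neg_abs_le (h (a,d+1) ((a,d+1)+(0,1)))
    have B1 := le_abs_self (h (a,d+1) ((a,d+1)-(0,1)))
    have C1 := neg_abs_le (h (a,d+1) ((a,d+1)-(0,1)))
    have B2 := le_abs_self (h (a,d+1) ((a,d+1)+(1,0)))
    have C2 := neg_abs_le (h (a,d+1) ((a,d+1)+(1,0)))
    have B3 := le_abs_self (h (a,d+1) ((a,d+1)-(1,0)))
    have C3 := neg_abs_le (h (a,d+1) ((a,d+1)-(1,0)))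
    have B4 := le_abs_self (h (a,d) ((a,d)+(0,1)))
    have C4 := neg_abs_le (h (a,d) ((a,d)+(0,1)))
    have B5 := le_abs_self (h (a,d) ((a,d)-(0,1)))
    have C5 := neg_abs_le (h (a,d) ((a,d)-(0,1)))
    have B6 := le_abs_self (h (a,d) ((a,d)+(1,0)))
    have C6 := neg_abs_le (h (a,d) ((a,d)+(1,0)))
    have B7 := le_abs_self (h (a,d) ((a,d)-(1,0)))
    have C7 := neg_abs_le (h (a,d) ((a,d)-(1,0)))
    simp only [Resolved, liftX, liftY, Prod.mk_add_mk, Prod.mk_sub_mk, Prod.mk.injEq] at *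
    rcases ht : t (a,d+1) with _|_ <;> rw [ht] at htype <;> rw [← htype] at hres <;>
      simp only [ht, ← htype, if_true, if_false, Bool.false_eq_true] at * <;>
      norm_num <;> simp_all <;> omega
  · obtain ⟨a,b⟩ := v
    obtain ⟨c,d⟩ := w
    simp only at h1 h2
    subst h1
    have : b = d - 1 := by omega
    subst this
    refine ⟨1 + |h (a,d-1) ((a,d-1)+(0,1))| + |h (a,d-1) ((a,d-1)-(0,1))| + |h (a,d-1) ((a,d-1)+(1,0))| + |h (a,d-1) ((a,d-1)-(1,0))| + |h (a,d) ((a,d)+(0,1))| + |h (a,d) ((a,d)-(0,1))| + |h (a,d) ((a,d)+(1,0))| + |h (a,d) ((a,d)-(1,0))|, fun n hn => ?_⟩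
    have B0 := le_abs_self (h (a,d-1) ((a,d-1)+(0,1)))
    have C0 := neg_abs_le (h (a,d-1) ((a,d-1)+(0,1)))
    have B1 := le_abs_self (h (a,d-1) ((a,d-1)-(0,1)))
    have C1 := neg_abs_le (h (a,d-1) ((a,d-1)-(0,1)))
    have B2 := le_abs_self (h (a,d-1) ((a,d-1)+(1,0)))
    have C2 := neg_abs_le (h (a,d-1) ((a,d-1)+(1,0)))
    have B3 := le_abs_self (h (a,d-1) ((a,d-1)-(1,0)))
    have C3 := neg_abs_le (h (a,d-1) ((a,d-1)-(1,0)))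
    have B4 := le_abs_self (h (a,d) ((a,d)+(0,1)))
    have C4 := neg_abs_le (h (a,d) ((a,d)+(0,1)))
    have B5 := le_abs_self (h (a,d) ((a,d)-(0,1)))
    have C5 := neg_abs_le (h (a,d) ((a,d)-(0,1)))
    have B6 := le_abs_self (h (a,d) ((a,d)+(1,0)))
    have C6 := neg_abs_le (h (a,d) ((a,d)+(1,0)))
    have B7 := le_abs_self (h (a,d) ((a,d)-(1,0)))
    have C7 := neg_abs_le (h (a,d) ((a,d)-(1,0)))
    simp only [Resolved, liftX, liftY, Prod.mk_add_mk, Prod.mk_sub_mk, Prod.mk.injEq] at *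
    rcases ht : t (a,d-1) with _|_ <;> rw [ht] at htype <;> rw [← htype] at hres <;>
      simp only [ht, ← htype, if_true, if_false, Bool.false_eq_true] at * <;>
      norm_num <;> simp_all <;> omega
end

section
/- Let X ⊆ ℤ × ℤ be a finite set of crossings with type map t : ℤ × ℤ → Bool. If (X, t) has no Celtic configuration, then there exists a height assignment h such that every crossing v ∈ X is resolved with respect to h. (This is the 'if' direction of the main theorem: a lattice diagram of a knot or link containing no Celtic configuration is the projection of a proper lattice stick knot or link, constructed by lifting the strands at the crossings one at a time.) -/
namespace CelticAux

/-- The auxiliary "lifting order" relation: `StepRel X t a b` holds when there is a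
crossing `v ∈ X` such that `a` and `b` are neighbors of `v` of the type opposite to
`v`, with `a` on the vertical side and `b` on the horizontal side when `t v = true`
(and the other way around when `t v = false`).  A resolving height assignment must
treat the edge `{v,b}` as higher than the edge `{v,a}`. -/
def StepRel (X : Set (ℤ × ℤ)) (t : ℤ × ℤ → Bool) (a b : ℤ × ℤ) : Prop :=
  ∃ v, v ∈ X ∧ a ∈ X ∧ b ∈ X ∧ t a ≠ t v ∧ t b ≠ t v ∧
    ((t v = true ∧ (a - v = ((0:ℤ),(1:ℤ)) ∨ a - v = (0,-1)) ∧ (b - v = (1,0) ∨ b - v = (-1,0))) ∨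
     (t v = false ∧ (a - v = (1,0) ∨ a - v = (-1,0)) ∧ (b - v = (0,1) ∨ b - v = (0,-1))))

/-- The relevant coordinate of a point: the `x`-coordinate for `x`-crossings,
the `y`-coordinate for `y`-crossings. -/
def gg (t : ℤ × ℤ → Bool) (p : ℤ × ℤ) : ℤ := if t p then p.1 else p.2

lemma mk_eq {p : ℤ × ℤ} {x y : ℤ} (hx : x = p.1) (hy : y = p.2) : ((x,y) : ℤ × ℤ) = p := by
  cases p; simp_all

lemma celtic_square {X : Set (ℤ × ℤ)} {t : ℤ × ℤ → Bool} {x y : ℤ}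
    (h1 : (x,y) ∈ X) (h2 : (x+1,y) ∈ X) (h3 : (x,y+1) ∈ X) (h4 : (x+1,y+1) ∈ X)
    (e1 : t (x,y) = t (x+1,y+1)) (e2 : t (x+1,y) = t (x,y+1)) (e3 : t (x,y) ≠ t (x+1,y)) :
    ∃ p, IsCeltic X t p := by
  refine ⟨(x,y), ?_, ?_, ?_, ?_, ?_, ?_, ?_⟩ <;>
    (try simp only [Prod.mk_add_mk, add_zero, zero_add]) <;> assumption

lemma celtic_of_diag {X : Set (ℤ × ℤ)} {t : ℤ × ℤ → Bool} {u a : ℤ × ℤ}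
    (hu : u ∈ X) (ha : a ∈ X) (h1 : ((a.1, u.2) : ℤ × ℤ) ∈ X) (h2 : ((u.1, a.2) : ℤ × ℤ) ∈ X)
    (d1 : a.1 = u.1 + 1 ∨ a.1 = u.1 - 1) (d2 : a.2 = u.2 + 1 ∨ a.2 = u.2 - 1)
    (e : t a = t u) (e1 : t (a.1, u.2) = t (u.1, a.2)) (e2 : t u ≠ t (a.1, u.2)) :
    ∃ p, IsCeltic X t p := by
  obtain ⟨u1, u2⟩ := u
  obtain ⟨a1, a2⟩ := a
  dsimp only at h1 h2 d1 d2 e1 e2 ⊢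
  rcases d1 with d1 | d1 <;> rcases d2 with d2 | d2
  · subst d1; subst d2
    exact celtic_square hu h1 h2 ha e.symm e1 e2
  · subst d1
    have d2' : u2 = a2 + 1 := by omega
    subst d2'
    refine celtic_square h2 ha hu h1 e1.symm e ?_
    rw [show t (u1, a2) = t (u1+1, a2+1) from e1.symm, e]
    exact e2.symm
  · subst d2
    have d1' : u1 = a1 + 1 := by omega
    subst d1'
    exact celtic_square h1 hu ha h2 e1 e.symm e2.symm
  · have d1' : u1 = a1 + 1 := by omega
    have d2' : u2 = a2 + 1 := by omega
    subst d1'; subst d2'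
    refine celtic_square ha h2 h1 hu e e1.symm ?_
    rw [e, ← e1]
    exact e2

lemma stepRel_gg {X : Set (ℤ × ℤ)} {t : ℤ × ℤ → Bool} {a b : ℤ × ℤ}
    (h : StepRel X t a b) : gg t b = gg t a + 1 ∨ gg t b = gg t a - 1 := by
  obtain ⟨v, hv, ha, hb, hta, htb, hbr⟩ := h
  rcases hbr with ⟨hv1, hA, hB⟩ | ⟨hv0, hA, hB⟩
  · have hta' : t a = false := by cases hh : t a <;> simp_all
    have htb' : t b = false := by cases hh : t b <;> simp_all
    simp only [gg, hta', htb']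
    norm_num
    simp only [Prod.ext_iff, Prod.fst_sub, Prod.snd_sub] at hA hB
    omega
  · have hta' : t a = true := by cases hh : t a <;> simp_all
    have htb' : t b = true := by cases hh : t b <;> simp_all
    simp only [gg, hta', htb']
    norm_num
    simp only [Prod.ext_iff, Prod.fst_sub, Prod.snd_sub] at hA hB
    omega

lemma stepRel_consist {X : Set (ℤ × ℤ)} {t : ℤ × ℤ → Bool}
    (hcc : ¬ ∃ p, IsCeltic X t p) {a u b : ℤ × ℤ}
    (h1 : StepRel X t a u) (h2 : StepRel X t u b) :
    gg t u - gg t a = gg t b - gg t u := by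
  obtain ⟨v, hvX, haX, huX, hta, htu, hbr1⟩ := h1
  obtain ⟨w, hwX, huX2, hbX, htu2, htb, hbr2⟩ := h2
  by_contra hne
  cases hq : t u with
  | false =>
    have hv : t v = true := by cases hh : t v <;> simp_all
    have hw : t w = true := by cases hh : t w <;> simp_all
    have hta' : t a = false := by cases hh : t a <;> simp_all
    have htb' : t b = false := by cases hh : t b <;> simp_all
    rcases hbr1 with ⟨_, hA, hB⟩ | ⟨hv0, _, _⟩
    swap
    · rw [hv] at hv0; exact absurd hv0 (by simp)
    rcases hbr2 with ⟨_, hC, hD⟩ | ⟨hw0, _, _⟩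
    swap
    · rw [hw] at hw0; exact absurd hw0 (by simp)
    simp only [gg, hta', htb', hq] at hne
    norm_num at hne
    simp only [Prod.ext_iff, Prod.fst_sub, Prod.snd_sub] at hA hB hC hD
    have m1 : ((a.1, u.2) : ℤ × ℤ) ∈ X := by
      rw [mk_eq (p := v) (by omega) (by omega)]; exact hvX
    have m2 : ((u.1, a.2) : ℤ × ℤ) ∈ X := by
      rw [mk_eq (p := w) (by omega) (by omega)]; exact hwX
    have T1 : t ((a.1, u.2) : ℤ × ℤ) = true := by
      rw [mk_eq (p := v) (by omega) (by omega)]; exact hv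
    have T2 : t ((u.1, a.2) : ℤ × ℤ) = true := by
      rw [mk_eq (p := w) (by omega) (by omega)]; exact hw
    exact hcc (celtic_of_diag huX haX m1 m2 (by omega) (by omega)
      (by rw [hta', hq]) (by rw [T1, T2]) (by rw [hq, T1]; simp))
  | true =>
    have hv : t v = false := by cases hh : t v <;> simp_all
    have hw : t w = false := by cases hh : t w <;> simp_all
    have hta' : t a = true := by cases hh : t a <;> simp_all
    have htb' : t b = true := by cases hh : t b <;> simp_all
    rcases hbr1 with ⟨hv0, _, _⟩ | ⟨_, hA, hB⟩
    · rw [hv] at hv0; exact absurd hv0 (by simp)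
    rcases hbr2 with ⟨hw0, _, _⟩ | ⟨_, hC, hD⟩
    · rw [hw] at hw0; exact absurd hw0 (by simp)
    simp only [gg, hta', htb', hq] at hne
    norm_num at hne
    simp only [Prod.ext_iff, Prod.fst_sub, Prod.snd_sub] at hA hB hC hD
    have m1 : ((a.1, u.2) : ℤ × ℤ) ∈ X := by
      rw [mk_eq (p := w) (by omega) (by omega)]; exact hwX
    have m2 : ((u.1, a.2) : ℤ × ℤ) ∈ X := by
      rw [mk_eq (p := v) (by omega) (by omega)]; exact hvX
    have T1 : t ((a.1, u.2) : ℤ × ℤ) = false := by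
      rw [mk_eq (p := w) (by omega) (by omega)]; exact hw
    have T2 : t ((u.1, a.2) : ℤ × ℤ) = false := by
      rw [mk_eq (p := v) (by omega) (by omega)]; exact hv
    exact hcc (celtic_of_diag huX haX m1 m2 (by omega) (by omega)
      (by rw [hta', hq]) (by rw [T1, T2]) (by rw [hq, T1]; simp))

lemma transGen_irrefl {X : Set (ℤ × ℤ)} {t : ℤ × ℤ → Bool}
    (hcc : ¬ ∃ p, IsCeltic X t p) (u : ℤ × ℤ) :
    ¬ Relation.TransGen (StepRel X t) u u := by
  set D : ℤ × ℤ → ℤ × ℤ → Prop := fun a b => StepRel X t a b ∧ gg t b < gg t a with hD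
  set U : ℤ × ℤ → ℤ × ℤ → Prop := fun a b => StepRel X t a b ∧ gg t a < gg t b with hU
  have hDlt : ∀ a b, Relation.TransGen D a b → gg t b < gg t a := by
    intro a b h
    induction h with
    | single h => exact h.2
    | tail _ h ih => exact lt_trans h.2 ih
  have hUlt : ∀ a b, Relation.TransGen U a b → gg t a < gg t b := by
    intro a b h
    induction h with
    | single h => exact h.2
    | tail _ h ih => exact lt_trans ih h.2
  have split : ∀ a b, Relation.TransGen (StepRel X t) a b →
      Relation.TransGen D a b ∨ Relation.TransGen U a b := by
    intro a b h
    induction h using Relation.TransGen.head_induction_on with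
    | single h' =>
      rcases stepRel_gg h' with h1 | h1
      · exact Or.inr (Relation.TransGen.single ⟨h', by omega⟩)
      · exact Or.inl (Relation.TransGen.single ⟨h', by omega⟩)
    | head h' hTG IH =>
      rename_i a' c
      rcases stepRel_gg h' with h1 | h1
      · refine Or.inr (Relation.TransGen.head ⟨h', by omega⟩ ?_)
        rcases IH with hd | hu
        · exfalso
          rcases Relation.TransGen.head'_iff.mp hd with ⟨c', hstep, _⟩
          have hc := stepRel_consist hcc h' hstep.1
          have := hstep.2
          omega
        · exact hu
      · refine Or.inl (Relation.TransGen.head ⟨h', by omega⟩ ?_)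
        rcases IH with hd | hu
        · exact hd
        · exfalso
          rcases Relation.TransGen.head'_iff.mp hu with ⟨c', hstep, _⟩
          have hc := stepRel_consist hcc h' hstep.1
          have := hstep.2
          omega
  intro hT
  rcases split u u hT with h | h
  · exact absurd (hDlt _ _ h) (lt_irrefl _)
  · exact absurd (hUlt _ _ h) (lt_irrefl _)

lemma exists_phi (X : Set (ℤ × ℤ)) (hX : X.Finite) (t : ℤ × ℤ → Bool)
    (hcc : ¬ ∃ p, IsCeltic X t p) :
    ∃ (φ : ℤ × ℤ → ℤ) (M : ℤ), (∀ p, 0 ≤ φ p ∧ φ p ≤ M) ∧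
      ∀ a b, StepRel X t a b → φ a < φ b := by
  classical
  refine ⟨fun a => ((hX.toFinset.filter
      (fun c => Relation.TransGen (StepRel X t) c a)).card : ℤ),
    (hX.toFinset.card : ℤ), ?_, ?_⟩
  · intro p
    constructor
    · exact Int.natCast_nonneg _
    · exact Nat.cast_le.mpr (Finset.card_filter_le _ _)
  · intro a b hab
    have haX : a ∈ X := hab.choose_spec.2.1
    have hsub : hX.toFinset.filter (fun c => Relation.TransGen (StepRel X t) c a) ⊂
        hX.toFinset.filter (fun c => Relation.TransGen (StepRel X t) c b) := by
      constructor
      · intro c hc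
        simp only [Finset.mem_filter] at hc ⊢
        exact ⟨hc.1, hc.2.tail hab⟩
      · intro hsup
        have hmem : a ∈ hX.toFinset.filter
            (fun c => Relation.TransGen (StepRel X t) c b) :=
          Finset.mem_filter.mpr ⟨hX.mem_toFinset.mpr haX, Relation.TransGen.single hab⟩
        have := Finset.mem_filter.mp (hsup hmem)
        exact transGen_irrefl hcc a this.2
    exact Nat.cast_lt.mpr (Finset.card_lt_card hsub)

/-- Contribution of an endpoint to an edge in direction `d` (`true` = horizontal). -/
def contrib (s : Finset (ℤ × ℤ)) (t : ℤ × ℤ → Bool) (N : ℤ) (φ : ℤ × ℤ → ℤ)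
    (x : ℤ × ℤ) (d : Bool) : ℤ :=
  if x ∈ s then (if t x = d then N + φ x else -N + φ x) else 0

/-- The height assignment. -/
def heightFun (s : Finset (ℤ × ℤ)) (t : ℤ × ℤ → Bool) (N : ℤ) (φ : ℤ × ℤ → ℤ)
    (p q : ℤ × ℤ) : ℤ :=
  if p.2 = q.2 ∧ (p.1 = q.1 + 1 ∨ q.1 = p.1 + 1) then
    contrib s t N φ p true + contrib s t N φ q true
  else if p.1 = q.1 ∧ (p.2 = q.2 + 1 ∨ q.2 = p.2 + 1) then
    contrib s t N φ p false + contrib s t N φ q false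
  else 0

lemma heightFun_symm (s : Finset (ℤ × ℤ)) (t : ℤ × ℤ → Bool) (N : ℤ) (φ : ℤ × ℤ → ℤ)
    (p q : ℤ × ℤ) : heightFun s t N φ p q = heightFun s t N φ q p := by
  unfold heightFun
  split_ifs
  all_goals try ring
  all_goals (exfalso; omega)

lemma heightFun_horiz {s : Finset (ℤ × ℤ)} {t : ℤ × ℤ → Bool} {N : ℤ} {φ : ℤ × ℤ → ℤ}
    {p q : ℤ × ℤ} (hyp : p.2 = q.2 ∧ (p.1 = q.1 + 1 ∨ q.1 = p.1 + 1)) :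
    heightFun s t N φ p q = contrib s t N φ p true + contrib s t N φ q true := by
  unfold heightFun
  rw [if_pos hyp]

lemma heightFun_vert {s : Finset (ℤ × ℤ)} {t : ℤ × ℤ → Bool} {N : ℤ} {φ : ℤ × ℤ → ℤ}
    {p q : ℤ × ℤ} (hyp : p.1 = q.1 ∧ (p.2 = q.2 + 1 ∨ q.2 = p.2 + 1)) :
    heightFun s t N φ p q = contrib s t N φ p false + contrib s t N φ q false := by
  unfold heightFun
  rw [if_neg (by omega), if_pos hyp]

lemma key1 {X : Set (ℤ × ℤ)} {t : ℤ × ℤ → Bool} {s : Finset (ℤ × ℤ)}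
    (hs : ∀ x, x ∈ s ↔ x ∈ X) {φ : ℤ × ℤ → ℤ} {M : ℤ}
    (hbound : ∀ p, 0 ≤ φ p ∧ φ p ≤ M)
    (hmono : ∀ a b, StepRel X t a b → φ a < φ b)
    {v1 v2 u1 u2 w1 w2 : ℤ} (hvs : (v1,v2) ∈ s) (hvt : t (v1,v2) = true)
    (hu : u1 = v1 ∧ (u2 = v2 + 1 ∨ v2 = u2 + 1))
    (hw : w2 = v2 ∧ (w1 = v1 + 1 ∨ v1 = w1 + 1)) :
    contrib s t (M+1) φ (v1,v2) false + contrib s t (M+1) φ (u1,u2) false <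
      contrib s t (M+1) φ (v1,v2) true + contrib s t (M+1) φ (w1,w2) true := by
  have bu := hbound (u1,u2)
  have bw := hbound (w1,w2)
  have bv := hbound (v1,v2)
  by_cases hus : (u1,u2) ∈ s <;> by_cases hws : (w1,w2) ∈ s <;>
    by_cases hut : t (u1,u2) = false <;> by_cases hwt : t (w1,w2) = false <;>
    first
      | (simp [contrib, hvt, hvs, hus, hws, hut, hwt]; omega)
      | (have harc : StepRel X t (u1,u2) (w1,w2) :=
          ⟨(v1,v2), (hs _).1 hvs, (hs _).1 hus, (hs _).1 hws,
            by simp [hut, hvt], by simp [hwt, hvt],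
            Or.inl ⟨hvt, by simp only [Prod.mk_sub_mk, Prod.mk.injEq]; omega,
              by simp only [Prod.mk_sub_mk, Prod.mk.injEq]; omega⟩⟩
         have hlt := hmono _ _ harc
         simp [contrib, hvt, hvs, hus, hws, hut, hwt]
         omega)

lemma key2 {X : Set (ℤ × ℤ)} {t : ℤ × ℤ → Bool} {s : Finset (ℤ × ℤ)}
    (hs : ∀ x, x ∈ s ↔ x ∈ X) {φ : ℤ × ℤ → ℤ} {M : ℤ}
    (hbound : ∀ p, 0 ≤ φ p ∧ φ p ≤ M)
    (hmono : ∀ a b, StepRel X t a b → φ a < φ b)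
    {v1 v2 u1 u2 w1 w2 : ℤ} (hvs : (v1,v2) ∈ s) (hvt : t (v1,v2) = false)
    (hu : u1 = v1 ∧ (u2 = v2 + 1 ∨ v2 = u2 + 1))
    (hw : w2 = v2 ∧ (w1 = v1 + 1 ∨ v1 = w1 + 1)) :
    contrib s t (M+1) φ (v1,v2) true + contrib s t (M+1) φ (w1,w2) true <
      contrib s t (M+1) φ (v1,v2) false + contrib s t (M+1) φ (u1,u2) false := by
  have bu := hbound (u1,u2)
  have bw := hbound (w1,w2)
  have bv := hbound (v1,v2)
  by_cases hus : (u1,u2) ∈ s <;> by_cases hws : (w1,w2) ∈ s <;>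
    by_cases hut : t (u1,u2) = true <;> by_cases hwt : t (w1,w2) = true <;>
    first
      | (simp [contrib, hvt, hvs, hus, hws, hut, hwt]; omega)
      | (have harc : StepRel X t (w1,w2) (u1,u2) :=
          ⟨(v1,v2), (hs _).1 hvs, (hs _).1 hws, (hs _).1 hus,
            by simp [hwt, hvt], by simp [hut, hvt],
            Or.inr ⟨hvt, by simp only [Prod.mk_sub_mk, Prod.mk.injEq]; omega,
              by simp only [Prod.mk_sub_mk, Prod.mk.injEq]; omega⟩⟩
         have hlt := hmono _ _ harc
         simp [contrib, hvt, hvs, hus, hws, hut, hwt]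
         omega)

end CelticAux

/-- The 'if' direction of the main theorem: if a finite crossing configuration
`(X, t)` has no Celtic configuration, then some height assignment resolves
every crossing of `X`. -/
theorem exists_resolving_height_of_no_celtic
    (X : Set (ℤ × ℤ)) (hX : X.Finite) (t : ℤ × ℤ → Bool)
    (hcc : ¬ ∃ p : ℤ × ℤ, IsCeltic X t p) :
    ∃ h : ℤ × ℤ → ℤ × ℤ → ℤ, (∀ p q, h p q = h q p) ∧ ∀ v ∈ X, Resolved t h v := by
  classical
  obtain ⟨φ, M, hbound, hmono⟩ := CelticAux.exists_phi X hX t hcc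
  have hs : ∀ x, x ∈ hX.toFinset ↔ x ∈ X := fun x => hX.mem_toFinset
  refine ⟨CelticAux.heightFun hX.toFinset t (M+1) φ,
    CelticAux.heightFun_symm hX.toFinset t (M+1) φ, ?_⟩
  intro v hv
  have hvs : v ∈ hX.toFinset := (hs v).2 hv
  obtain ⟨v1, v2⟩ := v
  have E1 : ((v1,v2) : ℤ × ℤ) + (0,1) = (v1, v2+1) := by simp
  have E2 : ((v1,v2) : ℤ × ℤ) - (0,1) = (v1, v2-1) := by
    simp [Prod.ext_iff]
  have E3 : ((v1,v2) : ℤ × ℤ) + (1,0) = (v1+1, v2) := by simp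
  have E4 : ((v1,v2) : ℤ × ℤ) - (1,0) = (v1-1, v2) := by
    simp [Prod.ext_iff]
  unfold Resolved
  rw [E1, E2, E3, E4]
  have hyU : ((v1,v2) : ℤ × ℤ).1 = ((v1,v2+1) : ℤ × ℤ).1 ∧
      (((v1,v2) : ℤ × ℤ).2 = ((v1,v2+1) : ℤ × ℤ).2 + 1 ∨
        ((v1,v2+1) : ℤ × ℤ).2 = ((v1,v2) : ℤ × ℤ).2 + 1) := ⟨rfl, Or.inr rfl⟩
  have hyD : ((v1,v2) : ℤ × ℤ).1 = ((v1,v2-1) : ℤ × ℤ).1 ∧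
      (((v1,v2) : ℤ × ℤ).2 = ((v1,v2-1) : ℤ × ℤ).2 + 1 ∨
        ((v1,v2-1) : ℤ × ℤ).2 = ((v1,v2) : ℤ × ℤ).2 + 1) :=
    ⟨rfl, Or.inl (show v1 = v1 ∧ v2 = v2 - 1 + 1 from by omega).2⟩
  have hxR : ((v1,v2) : ℤ × ℤ).2 = ((v1+1,v2) : ℤ × ℤ).2 ∧
      (((v1,v2) : ℤ × ℤ).1 = ((v1+1,v2) : ℤ × ℤ).1 + 1 ∨
        ((v1+1,v2) : ℤ × ℤ).1 = ((v1,v2) : ℤ × ℤ).1 + 1) := ⟨rfl, Or.inr rfl⟩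
  have hxL : ((v1,v2) : ℤ × ℤ).2 = ((v1-1,v2) : ℤ × ℤ).2 ∧
      (((v1,v2) : ℤ × ℤ).1 = ((v1-1,v2) : ℤ × ℤ).1 + 1 ∨
        ((v1-1,v2) : ℤ × ℤ).1 = ((v1,v2) : ℤ × ℤ).1 + 1) :=
    ⟨rfl, Or.inl (show v2 = v2 ∧ v1 = v1 - 1 + 1 from by omega).2⟩
  cases hvt : t (v1, v2) with
  | true =>
    rw [if_pos rfl]
    refine ⟨?_, ?_, ?_, ?_⟩
    · rw [CelticAux.heightFun_vert hyU, CelticAux.heightFun_horiz hxR]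
      exact CelticAux.key1 hs hbound hmono hvs hvt (by omega) (by omega)
    · rw [CelticAux.heightFun_vert hyU, CelticAux.heightFun_horiz hxL]
      exact CelticAux.key1 hs hbound hmono hvs hvt (by omega) (by omega)
    · rw [CelticAux.heightFun_vert hyD, CelticAux.heightFun_horiz hxR]
      exact CelticAux.key1 hs hbound hmono hvs hvt (by omega) (by omega)
    · rw [CelticAux.heightFun_vert hyD, CelticAux.heightFun_horiz hxL]
      exact CelticAux.key1 hs hbound hmono hvs hvt (by omega) (by omega)
  | false =>
    rw [if_neg (by simp)]
    refine ⟨?_, ?_, ?_, ?_⟩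
    · rw [CelticAux.heightFun_horiz hxR, CelticAux.heightFun_vert hyU]
      exact CelticAux.key2 hs hbound hmono hvs hvt (by omega) (by omega)
    · rw [CelticAux.heightFun_horiz hxR, CelticAux.heightFun_vert hyD]
      exact CelticAux.key2 hs hbound hmono hvs hvt (by omega) (by omega)
    · rw [CelticAux.heightFun_horiz hxL, CelticAux.heightFun_vert hyU]
      exact CelticAux.key2 hs hbound hmono hvs hvt (by omega) (by omega)
    · rw [CelticAux.heightFun_horiz hxL, CelticAux.heightFun_vert hyD]
      exact CelticAux.key2 hs hbound hmono hvs hvt (by omega) (by omega)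
end
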